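/- arXiv:2605.24714 — 11 statements merged into one kernel-verified Lean document; each statement's English description precedes it below -/
import Mathlib

section
/- Let ρ ∈ (1, 1/γ). Then for every V : S → ℝ with ‖V‖_w < ∞ one has ‖TV‖_w < ∞, and for all V, W : S → ℝ with ‖V‖_w < ∞ and ‖W‖_w < ∞, ‖TV − TW‖_w ≤ γ·ρ·‖V − W‖_w. In particular, since γρ < 1, T is a contraction on the Banach space {V : S → ℝ : ‖V‖_w < ∞} and has a unique fixed point there. -/
/-- Action-value for sensing (`u = 0`). -/
noncomputable def Q0 (γ lam0 c0 : ℝ) (V : ℕ → ℕ → ℝ) (m b : ℕ) : ℝ :=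
  (m : ℝ) + c0 + γ * (lam0 * V (m + 1) 1 + (1 - lam0) * V (m + 1) (b + 1))

/-- Action-value for communication (`u = 1`). -/
noncomputable def Q1 (γ lam1 c1 : ℝ) (V : ℕ → ℕ → ℝ) (m b : ℕ) : ℝ :=
  (m : ℝ) + c1 + γ * (lam1 * V (b + 1) (b + 1) + (1 - lam1) * V (m + 1) (b + 1))

/-- Action-value for joint sensing and communication (`u = 2`). -/
noncomputable def Q2 (γ lam2 c2 : ℝ) (V : ℕ → ℕ → ℝ) (m b : ℕ) : ℝ :=
  (m : ℝ) + c2 + γ * (lam2 * V (b + 1) 1 + (1 - lam2) * V (m + 1) (b + 1))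

/-- The Bellman operator `T`. -/
noncomputable def Tbell (γ lam0 lam1 lam2 c0 c1 c2 : ℝ) (V : ℕ → ℕ → ℝ) (m b : ℕ) : ℝ :=
  min (Q0 γ lam0 c0 V m b) (min (Q1 γ lam1 c1 V m b) (Q2 γ lam2 c2 V m b))

/-- convex combination bound -/
lemma convex_abs (γ lam u v A : ℝ) (hγ : 0 ≤ γ) (h0 : 0 ≤ lam) (h1 : lam ≤ 1)
    (hu : |u| ≤ A) (hv : |v| ≤ A) : |γ * (lam * u + (1 - lam) * v)| ≤ γ * A := by
  have h2 : |lam * u + (1 - lam) * v| ≤ A := by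
    calc |lam * u + (1 - lam) * v| ≤ |lam * u| + |(1 - lam) * v| := abs_add_le _ _
      _ = lam * |u| + (1 - lam) * |v| := by
          rw [abs_mul, abs_mul, abs_of_nonneg h0,
            abs_of_nonneg (show (0:ℝ) ≤ 1 - lam by linarith)]
      _ ≤ A := by nlinarith [abs_nonneg u, abs_nonneg v]
  calc |γ * (lam * u + (1 - lam) * v)| = γ * |lam * u + (1 - lam) * v| := by
        rw [abs_mul, abs_of_nonneg hγ]
    _ ≤ γ * A := by exact mul_le_mul_of_nonneg_left h2 hγ

lemma abs_min3 {x y z M : ℝ} (hx : |x| ≤ M) (hy : |y| ≤ M) (hz : |z| ≤ M) :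
    |min x (min y z)| ≤ M := by
  rw [abs_le] at *
  exact ⟨le_min hx.1 (le_min hy.1 hz.1), (min_le_left _ _).trans hx.2⟩

/-- For `ρ ∈ (1, 1/γ)`, the Bellman operator maps functions of finite
weighted norm to functions of finite weighted norm, satisfies the contraction estimate
`‖TV − TW‖_w ≤ γρ‖V − W‖_w`, and has a unique fixed point of finite weighted norm. -/
theorem bellman_contraction
    (γ lam0 lam1 lam2 c0 c1 c2 ρ : ℝ)
    (hγ0 : 0 < γ) (hγ1 : γ < 1)
    (hl0 : 0 < lam0) (hl0' : lam0 < 1)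
    (hl1 : 0 < lam1) (hl1' : lam1 < 1)
    (hl2 : 0 < lam2) (hl2' : lam2 < 1)
    (hc0 : 0 ≤ c0) (hc1 : 0 ≤ c1) (hc2 : 0 ≤ c2)
    (hρ1 : 1 < ρ) (hρ2 : ρ < 1 / γ) :
    (∀ V : ℕ → ℕ → ℝ,
      (∃ C : ℝ, ∀ m b : ℕ, 1 ≤ b → b ≤ m → |V m b| ≤ C * ρ ^ m) →
      ∃ C : ℝ, ∀ m b : ℕ, 1 ≤ b → b ≤ m →
        |Tbell γ lam0 lam1 lam2 c0 c1 c2 V m b| ≤ C * ρ ^ m)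
    ∧
    (∀ V W : ℕ → ℕ → ℝ, ∀ K : ℝ, 0 ≤ K →
      (∀ m b : ℕ, 1 ≤ b → b ≤ m → |V m b - W m b| ≤ K * ρ ^ m) →
      ∀ m b : ℕ, 1 ≤ b → b ≤ m →
        |Tbell γ lam0 lam1 lam2 c0 c1 c2 V m b -
            Tbell γ lam0 lam1 lam2 c0 c1 c2 W m b| ≤ γ * ρ * K * ρ ^ m)
    ∧
    (∃ Vstar : ℕ → ℕ → ℝ,
      ((∃ C : ℝ, ∀ m b : ℕ, 1 ≤ b → b ≤ m → |Vstar m b| ≤ C * ρ ^ m) ∧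
        ∀ m b : ℕ, 1 ≤ b → b ≤ m →
          Vstar m b = Tbell γ lam0 lam1 lam2 c0 c1 c2 Vstar m b) ∧
      ∀ V' : ℕ → ℕ → ℝ,
        ((∃ C : ℝ, ∀ m b : ℕ, 1 ≤ b → b ≤ m → |V' m b| ≤ C * ρ ^ m) ∧
          ∀ m b : ℕ, 1 ≤ b → b ≤ m →
            V' m b = Tbell γ lam0 lam1 lam2 c0 c1 c2 V' m b) →
        ∀ m b : ℕ, 1 ≤ b → b ≤ m → V' m b = Vstar m b) := by
  have hρ0 : (0:ℝ) < ρ := lt_trans one_pos hρ1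
  have hγρ : γ * ρ < 1 := by
    have h := mul_lt_mul_of_pos_left hρ2 hγ0
    rwa [mul_one_div, div_self (ne_of_gt hγ0)] at h
  have hγρ0 : 0 ≤ γ * ρ := le_of_lt (mul_pos hγ0 hρ0)
  have hpow1 : ∀ m : ℕ, (1:ℝ) ≤ ρ ^ m := fun m => one_le_pow₀ hρ1.le
  have hpow0 : ∀ m : ℕ, (0:ℝ) ≤ ρ ^ m := fun m => le_trans zero_le_one (hpow1 m)
  have hmono : ∀ a b : ℕ, a ≤ b → ρ ^ a ≤ ρ ^ b := fun a b h =>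
    pow_le_pow_right₀ hρ1.le h
  -- m ≤ ρ^m / (ρ-1)
  set K1 : ℝ := 1 / (ρ - 1) + (c0 + c1 + c2) with hK1def
  have hK1 : 0 ≤ K1 := by
    have : (0:ℝ) ≤ 1 / (ρ - 1) := div_nonneg zero_le_one (by linarith)
    simp only [hK1def]; linarith
  have hm_le : ∀ m : ℕ, (m : ℝ) + max c0 (max c1 c2) ≤ K1 * ρ ^ m := by
    intro m
    have hber : 1 + (m : ℝ) * (ρ - 1) ≤ ρ ^ m := by
      have h := one_add_mul_le_pow (by linarith : (-2:ℝ) ≤ ρ - 1) m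
      rw [show (1:ℝ) + (ρ - 1) = ρ from by ring] at h
      exact h
    have h1 : (m : ℝ) ≤ (1 / (ρ - 1)) * ρ ^ m := by
      rw [div_mul_eq_mul_div, le_div_iff₀ (by linarith : (0:ℝ) < ρ - 1)]
      nlinarith
    have h2 : max c0 (max c1 c2) ≤ (c0 + c1 + c2) * ρ ^ m := by
      have : max c0 (max c1 c2) ≤ c0 + c1 + c2 := by
        rcases max_cases c0 (max c1 c2) with ⟨h, _⟩ | ⟨h, _⟩ <;>
          rcases max_cases c1 c2 with ⟨h', _⟩ | ⟨h', _⟩ <;> simp_all <;> linarith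
      calc max c0 (max c1 c2) ≤ (c0 + c1 + c2) * 1 := by linarith
        _ ≤ (c0 + c1 + c2) * ρ ^ m :=
          mul_le_mul_of_nonneg_left (hpow1 m) (by linarith)
    simp only [hK1def]; rw [add_mul]; linarith
  -- the main per-point bound
  have bound_T : ∀ (C : ℝ), 0 ≤ C → ∀ V : ℕ → ℕ → ℝ,
      (∀ m b : ℕ, 1 ≤ b → b ≤ m → |V m b| ≤ C * ρ ^ m) →
      ∀ m b : ℕ, 1 ≤ b → b ≤ m →
        |Tbell γ lam0 lam1 lam2 c0 c1 c2 V m b| ≤ (K1 + γ * ρ * C) * ρ ^ m := by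
    intro C hC V hV m b hb hbm
    have hA : ∀ m' b' : ℕ, 1 ≤ b' → b' ≤ m' → m' ≤ m + 1 → |V m' b'| ≤ C * ρ ^ (m + 1) := by
      intro m' b' h1 h2 h3
      exact (hV m' b' h1 h2).trans (mul_le_mul_of_nonneg_left (hmono _ _ h3) hC)
    have h1 := hA (m+1) 1 le_rfl (by omega) le_rfl
    have h2 := hA (m+1) (b+1) (by omega) (by omega) le_rfl
    have h3 := hA (b+1) (b+1) (by omega) le_rfl (by omega)
    have h4 := hA (b+1) 1 le_rfl (by omega) (by omega)
    have hρm1 : ρ ^ (m + 1) = ρ * ρ ^ m := by rw [pow_succ]; ring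
    have key : ∀ lam c x y : ℝ, 0 ≤ lam → lam ≤ 1 → 0 ≤ c → c ≤ max c0 (max c1 c2) →
        |x| ≤ C * ρ ^ (m+1) → |y| ≤ C * ρ ^ (m+1) →
        |(m:ℝ) + c + γ * (lam * x + (1 - lam) * y)| ≤ (K1 + γ * ρ * C) * ρ ^ m := by
      intro lam c x y hl hl' hcn hcm hx hy
      calc |(m:ℝ) + c + γ * (lam * x + (1 - lam) * y)|
          ≤ |(m:ℝ) + c| + |γ * (lam * x + (1 - lam) * y)| := abs_add_le _ _
        _ ≤ ((m:ℝ) + c) + γ * (C * ρ ^ (m+1)) := by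
            have := convex_abs γ lam x y (C * ρ ^ (m+1)) hγ0.le hl hl' hx hy
            have hnn : |(m:ℝ) + c| = (m:ℝ) + c := abs_of_nonneg (by positivity)
            linarith
        _ ≤ K1 * ρ ^ m + γ * ρ * C * ρ ^ m := by
            have := hm_le m
            rw [hρm1]; nlinarith
        _ = (K1 + γ * ρ * C) * ρ ^ m := by ring
    exact abs_min3
      (key lam0 c0 _ _ hl0.le hl0'.le hc0 (le_max_left _ _) h1 h2)
      (key lam1 c1 _ _ hl1.le hl1'.le hc1 ((le_max_left c1 c2).trans (le_max_right _ _)) h3 h2)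
      (key lam2 c2 _ _ hl2.le hl2'.le hc2 ((le_max_right c1 c2).trans (le_max_right _ _)) h4 h2)
  -- the contraction estimate
  have contract : ∀ V W : ℕ → ℕ → ℝ, ∀ K : ℝ, 0 ≤ K →
      (∀ m b : ℕ, 1 ≤ b → b ≤ m → |V m b - W m b| ≤ K * ρ ^ m) →
      ∀ m b : ℕ, 1 ≤ b → b ≤ m →
        |Tbell γ lam0 lam1 lam2 c0 c1 c2 V m b -
            Tbell γ lam0 lam1 lam2 c0 c1 c2 W m b| ≤ γ * ρ * K * ρ ^ m := by
    intro V W K hK hVW m b hb hbm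
    have hA : ∀ m' b' : ℕ, 1 ≤ b' → b' ≤ m' → m' ≤ m + 1 →
        |V m' b' - W m' b'| ≤ K * ρ ^ (m + 1) := by
      intro m' b' h1 h2 h3
      exact (hVW m' b' h1 h2).trans (mul_le_mul_of_nonneg_left (hmono _ _ h3) hK)
    have h1 := hA (m+1) 1 le_rfl (by omega) le_rfl
    have h2 := hA (m+1) (b+1) (by omega) (by omega) le_rfl
    have h3 := hA (b+1) (b+1) (by omega) le_rfl (by omega)
    have h4 := hA (b+1) 1 le_rfl (by omega) (by omega)
    have hρm1 : ρ ^ (m + 1) = ρ * ρ ^ m := by rw [pow_succ]; ring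
    have hgoal : γ * (K * ρ ^ (m+1)) = γ * ρ * K * ρ ^ m := by rw [hρm1]; ring
    have keyQ : ∀ lam c x x' y y' : ℝ, 0 ≤ lam → lam ≤ 1 →
        |x - x'| ≤ K * ρ ^ (m+1) → |y - y'| ≤ K * ρ ^ (m+1) →
        |((m:ℝ) + c + γ * (lam * x + (1 - lam) * y)) -
          ((m:ℝ) + c + γ * (lam * x' + (1 - lam) * y'))| ≤ γ * ρ * K * ρ ^ m := by
      intro lam c x x' y y' hl hl' hx hy
      have heq : ((m:ℝ) + c + γ * (lam * x + (1 - lam) * y)) -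
          ((m:ℝ) + c + γ * (lam * x' + (1 - lam) * y')) =
          γ * (lam * (x - x') + (1 - lam) * (y - y')) := by ring
      rw [heq, ← hgoal]
      exact convex_abs γ lam (x - x') (y - y') (K * ρ ^ (m+1)) hγ0.le hl hl' hx hy
    have hQ0 := keyQ lam0 c0 _ _ _ _ hl0.le hl0'.le h1 h2
    have hQ1 := keyQ lam1 c1 _ _ _ _ hl1.le hl1'.le h3 h2
    have hQ2 := keyQ lam2 c2 _ _ _ _ hl2.le hl2'.le h4 h2
    calc |Tbell γ lam0 lam1 lam2 c0 c1 c2 V m b -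
            Tbell γ lam0 lam1 lam2 c0 c1 c2 W m b|
        ≤ max |Q0 γ lam0 c0 V m b - Q0 γ lam0 c0 W m b|
            (max |Q1 γ lam1 c1 V m b - Q1 γ lam1 c1 W m b|
                 |Q2 γ lam2 c2 V m b - Q2 γ lam2 c2 W m b|) := by
          refine (abs_min_sub_min_le_max _ _ _ _).trans (max_le_max le_rfl ?_)
          exact abs_min_sub_min_le_max _ _ _ _
      _ ≤ γ * ρ * K * ρ ^ m := max_le hQ0 (max_le hQ1 hQ2)
  refine ⟨?_, contract, ?_⟩
  · -- part 1
    rintro V ⟨C, hC⟩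
    refine ⟨K1 + γ * ρ * max C 0, ?_⟩
    intro m b hb hbm
    refine bound_T (max C 0) (le_max_right _ _) V (fun m b hb hbm => ?_) m b hb hbm
    exact (hC m b hb hbm).trans (mul_le_mul_of_nonneg_right (le_max_left _ _) (hpow0 m))
  · -- part 3: fixed point existence and uniqueness
    set T := Tbell γ lam0 lam1 lam2 c0 c1 c2 with hT
    set seq : ℕ → (ℕ → ℕ → ℝ) := fun n => T^[n] (fun _ _ => 0) with hseqdef
    have hseq0 : seq 0 = fun _ _ => 0 := rfl
    have hseqS : ∀ n, seq (n + 1) = T (seq n) := fun n =>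
      Function.iterate_succ_apply' T n _
    set B : ℝ := K1 / (1 - γ * ρ) with hBdef
    have h1γρ : 0 < 1 - γ * ρ := by linarith
    have hB0 : 0 ≤ B := by positivity
    have hBeq : K1 + γ * ρ * B = B := by
      rw [hBdef]; field_simp
      ring
    have hseq_bd : ∀ n m b, 1 ≤ b → b ≤ m → |seq n m b| ≤ B * ρ ^ m := by
      intro n
      induction n with
      | zero => intro m b hb hbm; simp [hseq0]; positivity
      | succ n ih =>
        intro m b hb hbm
        rw [hseqS]
        have := bound_T B hB0 (seq n) ih m b hb hbm
        rwa [hBeq] at this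
    have hdiff : ∀ n m b, 1 ≤ b → b ≤ m →
        |seq (n + 1) m b - seq n m b| ≤ (B * (γ * ρ) ^ n) * ρ ^ m := by
      intro n
      induction n with
      | zero =>
        intro m b hb hbm
        simp only [hseq0, pow_zero, mul_one]
        calc |seq 1 m b - 0| = |seq 1 m b| := by rw [sub_zero]
          _ ≤ B * ρ ^ m := hseq_bd 1 m b hb hbm
      | succ n ih =>
        intro m b hb hbm
        rw [hseqS n, hseqS (n+1)]
        have := contract (seq (n+1)) (seq n) (B * (γ * ρ) ^ n)
          (by positivity) ih m b hb hbm
        calc |T (seq (n+1)) m b - T (seq n) m b|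
            ≤ γ * ρ * (B * (γ * ρ) ^ n) * ρ ^ m := this
          _ = (B * (γ * ρ) ^ (n+1)) * ρ ^ m := by ring
    have hL : ∀ m b, 1 ≤ b → b ≤ m →
        ∃ L, Filter.Tendsto (fun n => seq n m b) Filter.atTop (nhds L) := by
      intro m b hb hbm
      apply cauchySeq_tendsto_of_complete
      apply cauchySeq_of_le_geometric (γ * ρ) (B * ρ ^ m) hγρ
      intro n
      rw [Real.dist_eq, abs_sub_comm]
      calc |seq (n + 1) m b - seq n m b| ≤ (B * (γ * ρ) ^ n) * ρ ^ m :=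
            hdiff n m b hb hbm
        _ = B * ρ ^ m * (γ * ρ) ^ n := by ring
    set Vstar : ℕ → ℕ → ℝ := fun m b =>
      if h : 1 ≤ b ∧ b ≤ m then (hL m b h.1 h.2).choose else 0 with hVstardef
    have hTend : ∀ m b (h1 : 1 ≤ b) (h2 : b ≤ m),
        Filter.Tendsto (fun n => seq n m b) Filter.atTop (nhds (Vstar m b)) := by
      intro m b h1 h2
      simp only [hVstardef, dif_pos (And.intro h1 h2)]
      exact (hL m b h1 h2).choose_spec
    have hVstar_bd : ∀ m b, 1 ≤ b → b ≤ m → |Vstar m b| ≤ B * ρ ^ m := by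
      intro m b h1 h2
      exact le_of_tendsto' (hTend m b h1 h2).abs (fun n => hseq_bd n m b h1 h2)
    have hfix : ∀ m b, 1 ≤ b → b ≤ m → Vstar m b = T Vstar m b := by
      intro m b h1 h2
      have t1 := hTend (m+1) 1 le_rfl (by omega)
      have t2 := hTend (m+1) (b+1) (by omega) (by omega)
      have t3 := hTend (b+1) (b+1) (by omega) le_rfl
      have t4 := hTend (b+1) 1 le_rfl (by omega)
      have tQ0 : Filter.Tendsto (fun n => Q0 γ lam0 c0 (seq n) m b) Filter.atTop
          (nhds (Q0 γ lam0 c0 Vstar m b)) := by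
        simp only [Q0]
        exact (((t1.const_mul lam0).add (t2.const_mul (1 - lam0))).const_mul γ).const_add _
      have tQ1 : Filter.Tendsto (fun n => Q1 γ lam1 c1 (seq n) m b) Filter.atTop
          (nhds (Q1 γ lam1 c1 Vstar m b)) := by
        simp only [Q1]
        exact (((t3.const_mul lam1).add (t2.const_mul (1 - lam1))).const_mul γ).const_add _
      have tQ2 : Filter.Tendsto (fun n => Q2 γ lam2 c2 (seq n) m b) Filter.atTop
          (nhds (Q2 γ lam2 c2 Vstar m b)) := by
        simp only [Q2]
        exact (((t4.const_mul lam2).add (t2.const_mul (1 - lam2))).const_mul γ).const_add _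
      have tT : Filter.Tendsto (fun n => T (seq n) m b) Filter.atTop
          (nhds (T Vstar m b)) := by
        simp only [hT, Tbell]
        exact tQ0.min (tQ1.min tQ2)
      have hshift : Filter.Tendsto (fun n => seq (n + 1) m b) Filter.atTop
          (nhds (Vstar m b)) :=
        (hTend m b h1 h2).comp (Filter.tendsto_add_atTop_nat 1)
      have heq : (fun n => seq (n + 1) m b) = fun n => T (seq n) m b :=
        funext fun n => by rw [hseqS n]
      rw [heq] at hshift
      exact tendsto_nhds_unique hshift tT
    refine ⟨Vstar, ⟨⟨B, hVstar_bd⟩, hfix⟩, ?_⟩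
    rintro V' ⟨⟨C', hC'⟩, hfix'⟩ m b hb hbm
    set K : ℝ := max C' 0 + B with hKdef
    have hK0 : 0 ≤ K := by positivity
    have hKbd : ∀ m b, 1 ≤ b → b ≤ m → |V' m b - Vstar m b| ≤ K * ρ ^ m := by
      intro m b h1 h2
      calc |V' m b - Vstar m b| ≤ |V' m b| + |Vstar m b| := abs_sub _ _
        _ ≤ max C' 0 * ρ ^ m + B * ρ ^ m := by
            have hv : |V' m b| ≤ max C' 0 * ρ ^ m :=
              (hC' m b h1 h2).trans
                (mul_le_mul_of_nonneg_right (le_max_left _ _) (hpow0 m))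
            linarith [hVstar_bd m b h1 h2]
        _ = K * ρ ^ m := by rw [hKdef]; ring
    have hiter : ∀ n, ∀ m b, 1 ≤ b → b ≤ m →
        |V' m b - Vstar m b| ≤ ((γ * ρ) ^ n * K) * ρ ^ m := by
      intro n
      induction n with
      | zero => intro m b h1 h2; simpa using hKbd m b h1 h2
      | succ n ih =>
        intro m b h1 h2
        rw [hfix' m b h1 h2, hfix m b h1 h2]
        have := contract V' Vstar ((γ * ρ) ^ n * K) (by positivity) ih m b h1 h2
        calc |T V' m b - T Vstar m b| ≤ γ * ρ * ((γ * ρ) ^ n * K) * ρ ^ m := this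
          _ = ((γ * ρ) ^ (n+1) * K) * ρ ^ m := by ring
    have htend0 : Filter.Tendsto (fun n => ((γ * ρ) ^ n * K) * ρ ^ m)
        Filter.atTop (nhds 0) := by
      have h := tendsto_pow_atTop_nhds_zero_of_lt_one hγρ0 hγρ
      have := (h.mul_const K).mul_const (ρ ^ m)
      simpa using this
    have habs0 : |V' m b - Vstar m b| ≤ 0 :=
      ge_of_tendsto' htend0 (fun n => hiter n m b hb hbm)
    have : V' m b - Vstar m b = 0 :=
      abs_eq_zero.mp (le_antisymm habs0 (abs_nonneg _))
    linarith
end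

section
/- If V : S → ℝ is coordinatewise nondecreasing, then TV is coordinatewise nondecreasing. -/
/-- If `V` is coordinatewise nondecreasing on
`S = {(m,b) : m ≥ b ≥ 1}`, then so is `TV`. -/
theorem Tbell_monotone
    (γ lam0 lam1 lam2 c0 c1 c2 : ℝ)
    (hγ0 : 0 < γ) (hγ1 : γ < 1)
    (hl0 : 0 < lam0) (hl0' : lam0 < 1)
    (hl1 : 0 < lam1) (hl1' : lam1 < 1)
    (hl2 : 0 < lam2) (hl2' : lam2 < 1)
    (hc0 : 0 ≤ c0) (hc1 : 0 ≤ c1) (hc2 : 0 ≤ c2)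
    (V : ℕ → ℕ → ℝ)
    (hmono : ∀ m b m' b' : ℕ, 1 ≤ b → b ≤ m → 1 ≤ b' → b' ≤ m' →
      m ≤ m' → b ≤ b' → V m b ≤ V m' b') :
    ∀ m b m' b' : ℕ, 1 ≤ b → b ≤ m → 1 ≤ b' → b' ≤ m' → m ≤ m' → b ≤ b' →
      Tbell γ lam0 lam1 lam2 c0 c1 c2 V m b ≤
        Tbell γ lam0 lam1 lam2 c0 c1 c2 V m' b' := by
  intro m b m' b' hb hbm hb' hbm' hmm hbb
  have hγ : 0 ≤ γ := le_of_lt hγ0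
  have hmm1 : (m:ℝ) ≤ (m':ℝ) := by exact_mod_cast hmm
  have key : ∀ lam : ℝ, 0 < lam → lam < 1 →
      ∀ a a' c c' : ℝ, a ≤ a' → c ≤ c' →
      lam * a + (1 - lam) * c ≤ lam * a' + (1 - lam) * c' := by
    intro lam h1 h2 a a' c c' ha hc
    have : (0:ℝ) ≤ 1 - lam := by linarith
    nlinarith
  have h1 : V (m+1) 1 ≤ V (m'+1) 1 :=
    hmono _ _ _ _ le_rfl (by omega) le_rfl (by omega) (by omega) le_rfl
  have h2 : V (m+1) (b+1) ≤ V (m'+1) (b'+1) :=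
    hmono _ _ _ _ (by omega) (by omega) (by omega) (by omega) (by omega) (by omega)
  have h3 : V (b+1) (b+1) ≤ V (b'+1) (b'+1) :=
    hmono _ _ _ _ (by omega) le_rfl (by omega) le_rfl (by omega) (by omega)
  have h4 : V (b+1) 1 ≤ V (b'+1) 1 :=
    hmono _ _ _ _ le_rfl (by omega) le_rfl (by omega) (by omega) le_rfl
  have hQ0 : Q0 γ lam0 c0 V m b ≤ Q0 γ lam0 c0 V m' b' := by
    unfold Q0
    have := key lam0 hl0 hl0' _ _ _ _ h1 h2
    have := mul_le_mul_of_nonneg_left this hγ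
    linarith
  have hQ1 : Q1 γ lam1 c1 V m b ≤ Q1 γ lam1 c1 V m' b' := by
    unfold Q1
    have := key lam1 hl1 hl1' _ _ _ _ h3 h2
    have := mul_le_mul_of_nonneg_left this hγ
    linarith
  have hQ2 : Q2 γ lam2 c2 V m b ≤ Q2 γ lam2 c2 V m' b' := by
    unfold Q2
    have := key lam2 hl2 hl2' _ _ _ _ h4 h2
    have := mul_le_mul_of_nonneg_left this hγ
    linarith
  exact min_le_min hQ0 (min_le_min hQ1 hQ2)
end

section
/- If V : S → ℝ is discretely concave in m (for each fixed b), then TV is discretely concave in m (for each fixed b). -/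
/-- If `V` is discretely concave in the first coordinate on
`S = {(m,b) : m ≥ b ≥ 1}`, then so is `TV`. -/
theorem Tbell_discrete_concave
    (γ lam0 lam1 lam2 c0 c1 c2 : ℝ)
    (hγ0 : 0 < γ) (hγ1 : γ < 1)
    (hl0 : 0 < lam0) (hl0' : lam0 < 1)
    (hl1 : 0 < lam1) (hl1' : lam1 < 1)
    (hl2 : 0 < lam2) (hl2' : lam2 < 1)
    (hc0 : 0 ≤ c0) (hc1 : 0 ≤ c1) (hc2 : 0 ≤ c2)
    (V : ℕ → ℕ → ℝ)
    (hconc : ∀ m b : ℕ, 1 ≤ b → b ≤ m →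
      V (m + 2) b - 2 * V (m + 1) b + V m b ≤ 0) :
    ∀ m b : ℕ, 1 ≤ b → b ≤ m →
      Tbell γ lam0 lam1 lam2 c0 c1 c2 V (m + 2) b -
        2 * Tbell γ lam0 lam1 lam2 c0 c1 c2 V (m + 1) b +
        Tbell γ lam0 lam1 lam2 c0 c1 c2 V m b ≤ 0 := by
  intro m b hb hbm
  have hA : V (m + 3) 1 - 2 * V (m + 2) 1 + V (m + 1) 1 ≤ 0 := by
    have := hconc (m + 1) 1 le_rfl (by omega)
    simpa [show m + 1 + 2 = m + 3 from rfl, show m + 1 + 1 = m + 2 from rfl] using this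
  have hB : V (m + 3) (b + 1) - 2 * V (m + 2) (b + 1) + V (m + 1) (b + 1) ≤ 0 := by
    have := hconc (m + 1) (b + 1) (by omega) (by omega)
    simpa [show m + 1 + 2 = m + 3 from rfl, show m + 1 + 1 = m + 2 from rfl] using this
  have hgl0 : 0 ≤ γ * lam0 := mul_nonneg hγ0.le hl0.le
  have hgl1 : 0 ≤ γ * lam1 := mul_nonneg hγ0.le hl1.le
  have hgl2 : 0 ≤ γ * lam2 := mul_nonneg hγ0.le hl2.le
  have hgl0' : 0 ≤ γ * (1 - lam0) := mul_nonneg hγ0.le (by linarith)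
  have hgl1' : 0 ≤ γ * (1 - lam1) := mul_nonneg hγ0.le (by linarith)
  have hgl2' : 0 ≤ γ * (1 - lam2) := mul_nonneg hγ0.le (by linarith)
  have h0 : Q0 γ lam0 c0 V (m + 2) b - 2 * Q0 γ lam0 c0 V (m + 1) b
      + Q0 γ lam0 c0 V m b ≤ 0 := by
    simp only [Q0, show m + 2 + 1 = m + 3 from rfl, show m + 1 + 1 = m + 2 from rfl]
    push_cast
    nlinarith [mul_nonneg hgl0 (neg_nonneg.2 hA), mul_nonneg hgl0' (neg_nonneg.2 hB)]
  have h1 : Q1 γ lam1 c1 V (m + 2) b - 2 * Q1 γ lam1 c1 V (m + 1) b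
      + Q1 γ lam1 c1 V m b ≤ 0 := by
    simp only [Q1, show m + 2 + 1 = m + 3 from rfl, show m + 1 + 1 = m + 2 from rfl]
    push_cast
    nlinarith [mul_nonneg hgl1' (neg_nonneg.2 hB)]
  have h2 : Q2 γ lam2 c2 V (m + 2) b - 2 * Q2 γ lam2 c2 V (m + 1) b
      + Q2 γ lam2 c2 V m b ≤ 0 := by
    simp only [Q2, show m + 2 + 1 = m + 3 from rfl, show m + 1 + 1 = m + 2 from rfl]
    push_cast
    nlinarith [mul_nonneg hgl2' (neg_nonneg.2 hB)]
  -- T at m+2 and m is ≤ each Q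
  have t20 : Tbell γ lam0 lam1 lam2 c0 c1 c2 V (m + 2) b ≤ Q0 γ lam0 c0 V (m + 2) b :=
    min_le_left _ _
  have t21 : Tbell γ lam0 lam1 lam2 c0 c1 c2 V (m + 2) b ≤ Q1 γ lam1 c1 V (m + 2) b :=
    le_trans (min_le_right _ _) (min_le_left _ _)
  have t22 : Tbell γ lam0 lam1 lam2 c0 c1 c2 V (m + 2) b ≤ Q2 γ lam2 c2 V (m + 2) b :=
    le_trans (min_le_right _ _) (min_le_right _ _)
  have t00 : Tbell γ lam0 lam1 lam2 c0 c1 c2 V m b ≤ Q0 γ lam0 c0 V m b :=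
    min_le_left _ _
  have t01 : Tbell γ lam0 lam1 lam2 c0 c1 c2 V m b ≤ Q1 γ lam1 c1 V m b :=
    le_trans (min_le_right _ _) (min_le_left _ _)
  have t02 : Tbell γ lam0 lam1 lam2 c0 c1 c2 V m b ≤ Q2 γ lam2 c2 V m b :=
    le_trans (min_le_right _ _) (min_le_right _ _)
  have hmid : Tbell γ lam0 lam1 lam2 c0 c1 c2 V (m + 1) b = Q0 γ lam0 c0 V (m + 1) b
      ∨ Tbell γ lam0 lam1 lam2 c0 c1 c2 V (m + 1) b = Q1 γ lam1 c1 V (m + 1) b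
      ∨ Tbell γ lam0 lam1 lam2 c0 c1 c2 V (m + 1) b = Q2 γ lam2 c2 V (m + 1) b := by
    unfold Tbell
    rcases min_cases (Q0 γ lam0 c0 V (m + 1) b)
        (min (Q1 γ lam1 c1 V (m + 1) b) (Q2 γ lam2 c2 V (m + 1) b)) with h | h
    · exact Or.inl h.1
    · rcases min_cases (Q1 γ lam1 c1 V (m + 1) b) (Q2 γ lam2 c2 V (m + 1) b) with h' | h'
      · exact Or.inr (Or.inl (h.1.trans h'.1))
      · exact Or.inr (Or.inr (h.1.trans h'.1))
  rcases hmid with h | h | h <;> rw [h] <;> linarith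
end

section
/- The optimal value function V★ is coordinatewise nondecreasing and discretely concave in m; that is, V★(m,b) ≤ V★(m′,b′) whenever (m,b), (m′,b′) ∈ S with m ≤ m′ and b ≤ b′, and V★(m+2,b) − 2·V★(m+1,b) + V★(m,b) ≤ 0 for all (m,b) ∈ S. -/
namespace VstarAux

/-- value iteration iterates, starting from 0 -/
noncomputable def Witer (γ lam0 lam1 lam2 c0 c1 c2 : ℝ) : ℕ → ℕ → ℕ → ℝ
  | 0 => fun _ _ => 0
  | n + 1 => Tbell γ lam0 lam1 lam2 c0 c1 c2 (Witer γ lam0 lam1 lam2 c0 c1 c2 n)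

lemma comb_mono {t A B A' B' : ℝ} (ht : 0 ≤ t) (ht' : t ≤ 1) (hA : A ≤ A') (hB : B ≤ B') :
    t * A + (1 - t) * B ≤ t * A' + (1 - t) * B' := by nlinarith

lemma comb_abs {t A B K : ℝ} (ht : 0 ≤ t) (ht' : t ≤ 1) (hA : |A| ≤ K) (hB : |B| ≤ K) :
    |t * A + (1 - t) * B| ≤ K := by
  calc |t * A + (1 - t) * B| ≤ |t * A| + |(1 - t) * B| := abs_add_le _ _
    _ = t * |A| + (1 - t) * |B| := by
        rw [abs_mul, abs_mul, abs_of_nonneg ht,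
          abs_of_nonneg (show (0:ℝ) ≤ 1 - t by linarith)]
    _ ≤ t * K + (1 - t) * K := by
        exact add_le_add (mul_le_mul_of_nonneg_left hA ht)
          (mul_le_mul_of_nonneg_left hB (by linarith))
    _ = K := by ring

section Tprops

variable {γ lam0 lam1 lam2 c0 c1 c2 ρ : ℝ}

/-- Monotonicity property on S -/
def Mono (V : ℕ → ℕ → ℝ) : Prop :=
  ∀ m b m' b' : ℕ, 1 ≤ b → b ≤ m → 1 ≤ b' → b' ≤ m' → m ≤ m' → b ≤ b' → V m b ≤ V m' b'

/-- Discrete concavity in m on S -/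
def Conc (V : ℕ → ℕ → ℝ) : Prop :=
  ∀ m b : ℕ, 1 ≤ b → b ≤ m → V (m + 2) b + V m b ≤ 2 * V (m + 1) b

lemma mono_step (hγ : 0 ≤ γ)
    (h0 : 0 ≤ lam0) (h0' : lam0 ≤ 1) (h1 : 0 ≤ lam1) (h1' : lam1 ≤ 1)
    (h2 : 0 ≤ lam2) (h2' : lam2 ≤ 1)
    {V : ℕ → ℕ → ℝ} (hV : Mono V) :
    Mono (Tbell γ lam0 lam1 lam2 c0 c1 c2 V) := by
  intro m b m' b' hb hbm hb' hbm' hmm hbb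
  have hm : (m : ℝ) ≤ m' := Nat.cast_le.mpr hmm
  unfold Tbell
  refine min_le_min ?_ (min_le_min ?_ ?_)
  · unfold Q0
    have hA := hV (m+1) 1 (m'+1) 1 le_rfl (by omega) le_rfl (by omega) (by omega) le_rfl
    have hB := hV (m+1) (b+1) (m'+1) (b'+1) (by omega) (by omega) (by omega) (by omega)
      (by omega) (by omega)
    have h := comb_mono h0 h0' hA hB
    have := mul_le_mul_of_nonneg_left h hγ
    linarith
  · unfold Q1
    have hA := hV (b+1) (b+1) (b'+1) (b'+1) (by omega) le_rfl (by omega) le_rfl (by omega)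
      (by omega)
    have hB := hV (m+1) (b+1) (m'+1) (b'+1) (by omega) (by omega) (by omega) (by omega)
      (by omega) (by omega)
    have h := comb_mono h1 h1' hA hB
    have := mul_le_mul_of_nonneg_left h hγ
    linarith
  · unfold Q2
    have hA := hV (b+1) 1 (b'+1) 1 le_rfl (by omega) le_rfl (by omega) (by omega) le_rfl
    have hB := hV (m+1) (b+1) (m'+1) (b'+1) (by omega) (by omega) (by omega) (by omega)
      (by omega) (by omega)
    have h := comb_mono h2 h2' hA hB
    have := mul_le_mul_of_nonneg_left h hγ
    linarith

lemma conc_step (hγ : 0 ≤ γ)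
    (h0 : 0 ≤ lam0) (h0' : lam0 ≤ 1) (h1 : 0 ≤ lam1) (h1' : lam1 ≤ 1)
    (h2 : 0 ≤ lam2) (h2' : lam2 ≤ 1)
    {V : ℕ → ℕ → ℝ} (hV : Conc V) :
    Conc (Tbell γ lam0 lam1 lam2 c0 c1 c2 V) := by
  intro m b hb hbm
  have hA := hV (m+1) 1 le_rfl (by omega)
  have hB := hV (m+1) (b+1) (by omega) (by omega)
  -- concavity of the three action values
  have hQ0 : Q0 γ lam0 c0 V (m+2) b + Q0 γ lam0 c0 V m b ≤ 2 * Q0 γ lam0 c0 V (m+1) b := by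
    unfold Q0
    have h := comb_mono (A := V (m+1+2) 1 + V (m+1) 1) (B := V (m+1+2) (b+1) + V (m+1) (b+1))
      (A' := 2 * V (m+1+1) 1) (B' := 2 * V (m+1+1) (b+1)) h0 h0' hA hB
    have hg := mul_le_mul_of_nonneg_left h hγ
    push_cast
    have e1 : m + 1 + 2 = m + 3 := by ring
    have e2 : m + 1 + 1 = m + 2 := by ring
    rw [e1, e2] at hg
    have e3 : m + 2 + 1 = m + 3 := by ring
    rw [e3]
    nlinarith [hg]
  have hQ1 : Q1 γ lam1 c1 V (m+2) b + Q1 γ lam1 c1 V m b ≤ 2 * Q1 γ lam1 c1 V (m+1) b := by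
    unfold Q1
    have h := comb_mono (A := V (b+1) (b+1) + V (b+1) (b+1)) (B := V (m+1+2) (b+1) + V (m+1) (b+1))
      (A' := 2 * V (b+1) (b+1)) (B' := 2 * V (m+1+1) (b+1)) h1 h1' (by linarith) hB
    have hg := mul_le_mul_of_nonneg_left h hγ
    push_cast
    have e1 : m + 1 + 2 = m + 3 := by ring
    have e2 : m + 1 + 1 = m + 2 := by ring
    rw [e1, e2] at hg
    have e3 : m + 2 + 1 = m + 3 := by ring
    rw [e3]
    nlinarith [hg]
  have hQ2 : Q2 γ lam2 c2 V (m+2) b + Q2 γ lam2 c2 V m b ≤ 2 * Q2 γ lam2 c2 V (m+1) b := by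
    unfold Q2
    have h := comb_mono (A := V (b+1) 1 + V (b+1) 1) (B := V (m+1+2) (b+1) + V (m+1) (b+1))
      (A' := 2 * V (b+1) 1) (B' := 2 * V (m+1+1) (b+1)) h2 h2' (by linarith) hB
    have hg := mul_le_mul_of_nonneg_left h hγ
    push_cast
    have e1 : m + 1 + 2 = m + 3 := by ring
    have e2 : m + 1 + 1 = m + 2 := by ring
    rw [e1, e2] at hg
    have e3 : m + 2 + 1 = m + 3 := by ring
    rw [e3]
    nlinarith [hg]
  -- upper bounds
  have u02 : Tbell γ lam0 lam1 lam2 c0 c1 c2 V (m+2) b ≤ Q0 γ lam0 c0 V (m+2) b :=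
    min_le_left _ _
  have u00 : Tbell γ lam0 lam1 lam2 c0 c1 c2 V m b ≤ Q0 γ lam0 c0 V m b := min_le_left _ _
  have u12 : Tbell γ lam0 lam1 lam2 c0 c1 c2 V (m+2) b ≤ Q1 γ lam1 c1 V (m+2) b :=
    le_trans (min_le_right _ _) (min_le_left _ _)
  have u10 : Tbell γ lam0 lam1 lam2 c0 c1 c2 V m b ≤ Q1 γ lam1 c1 V m b :=
    le_trans (min_le_right _ _) (min_le_left _ _)
  have u22 : Tbell γ lam0 lam1 lam2 c0 c1 c2 V (m+2) b ≤ Q2 γ lam2 c2 V (m+2) b :=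
    le_trans (min_le_right _ _) (min_le_right _ _)
  have u20 : Tbell γ lam0 lam1 lam2 c0 c1 c2 V m b ≤ Q2 γ lam2 c2 V m b :=
    le_trans (min_le_right _ _) (min_le_right _ _)
  rcases le_total (Q0 γ lam0 c0 V (m+1) b)
      (min (Q1 γ lam1 c1 V (m+1) b) (Q2 γ lam2 c2 V (m+1) b)) with h | h
  · have heq : Tbell γ lam0 lam1 lam2 c0 c1 c2 V (m+1) b = Q0 γ lam0 c0 V (m+1) b :=
      min_eq_left h
    linarith
  · rcases le_total (Q1 γ lam1 c1 V (m+1) b) (Q2 γ lam2 c2 V (m+1) b) with h' | h'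
    · have heq : Tbell γ lam0 lam1 lam2 c0 c1 c2 V (m+1) b = Q1 γ lam1 c1 V (m+1) b := by
        unfold Tbell
        rw [min_eq_right h, min_eq_left h']
      linarith
    · have heq : Tbell γ lam0 lam1 lam2 c0 c1 c2 V (m+1) b = Q2 γ lam2 c2 V (m+1) b := by
        unfold Tbell
        rw [min_eq_right h, min_eq_right h']
      linarith

lemma contract (hγ : 0 ≤ γ) (hρ : 1 ≤ ρ)
    (h0 : 0 ≤ lam0) (h0' : lam0 ≤ 1) (h1 : 0 ≤ lam1) (h1' : lam1 ≤ 1)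
    (h2 : 0 ≤ lam2) (h2' : lam2 ≤ 1)
    {V V' : ℕ → ℕ → ℝ} {K : ℝ} (hK : 0 ≤ K)
    (h : ∀ m b : ℕ, 1 ≤ b → b ≤ m → |V m b - V' m b| ≤ K * ρ ^ m) :
    ∀ m b : ℕ, 1 ≤ b → b ≤ m →
      |Tbell γ lam0 lam1 lam2 c0 c1 c2 V m b - Tbell γ lam0 lam1 lam2 c0 c1 c2 V' m b|
        ≤ γ * ρ * K * ρ ^ m := by
  intro m b hb hbm
  have hρpow : ρ ^ (b+1) ≤ ρ ^ (m+1) := pow_le_pow_right₀ hρ (by omega)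
  have d1 : |V (m+1) 1 - V' (m+1) 1| ≤ K * ρ ^ (m+1) := h (m+1) 1 le_rfl (by omega)
  have d2 : |V (m+1) (b+1) - V' (m+1) (b+1)| ≤ K * ρ ^ (m+1) :=
    h (m+1) (b+1) (by omega) (by omega)
  have d3 : |V (b+1) (b+1) - V' (b+1) (b+1)| ≤ K * ρ ^ (m+1) :=
    le_trans (h (b+1) (b+1) (by omega) le_rfl) (mul_le_mul_of_nonneg_left hρpow hK)
  have d4 : |V (b+1) 1 - V' (b+1) 1| ≤ K * ρ ^ (m+1) :=
    le_trans (h (b+1) 1 le_rfl (by omega)) (mul_le_mul_of_nonneg_left hρpow hK)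
  have dQ0 : |Q0 γ lam0 c0 V m b - Q0 γ lam0 c0 V' m b| ≤ γ * (K * ρ ^ (m+1)) := by
    have e : Q0 γ lam0 c0 V m b - Q0 γ lam0 c0 V' m b
        = γ * (lam0 * (V (m+1) 1 - V' (m+1) 1)
            + (1 - lam0) * (V (m+1) (b+1) - V' (m+1) (b+1))) := by
      unfold Q0; ring
    rw [e, abs_mul, abs_of_nonneg hγ]
    exact mul_le_mul_of_nonneg_left (comb_abs h0 h0' d1 d2) hγ
  have dQ1 : |Q1 γ lam1 c1 V m b - Q1 γ lam1 c1 V' m b| ≤ γ * (K * ρ ^ (m+1)) := by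
    have e : Q1 γ lam1 c1 V m b - Q1 γ lam1 c1 V' m b
        = γ * (lam1 * (V (b+1) (b+1) - V' (b+1) (b+1))
            + (1 - lam1) * (V (m+1) (b+1) - V' (m+1) (b+1))) := by
      unfold Q1; ring
    rw [e, abs_mul, abs_of_nonneg hγ]
    exact mul_le_mul_of_nonneg_left (comb_abs h1 h1' d3 d2) hγ
  have dQ2 : |Q2 γ lam2 c2 V m b - Q2 γ lam2 c2 V' m b| ≤ γ * (K * ρ ^ (m+1)) := by
    have e : Q2 γ lam2 c2 V m b - Q2 γ lam2 c2 V' m b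
        = γ * (lam2 * (V (b+1) 1 - V' (b+1) 1)
            + (1 - lam2) * (V (m+1) (b+1) - V' (m+1) (b+1))) := by
      unfold Q2; ring
    rw [e, abs_mul, abs_of_nonneg hγ]
    exact mul_le_mul_of_nonneg_left (comb_abs h2 h2' d4 d2) hγ
  have key : |Tbell γ lam0 lam1 lam2 c0 c1 c2 V m b - Tbell γ lam0 lam1 lam2 c0 c1 c2 V' m b|
      ≤ γ * (K * ρ ^ (m+1)) := by
    unfold Tbell
    refine le_trans (abs_min_sub_min_le_max _ _ _ _) (max_le dQ0 ?_)
    exact le_trans (abs_min_sub_min_le_max _ _ _ _) (max_le dQ1 dQ2)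
  calc |Tbell γ lam0 lam1 lam2 c0 c1 c2 V m b - Tbell γ lam0 lam1 lam2 c0 c1 c2 V' m b|
      ≤ γ * (K * ρ ^ (m+1)) := key
    _ = γ * ρ * K * ρ ^ m := by rw [pow_succ]; ring

end Tprops

end VstarAux

/-- The optimal value function `V★` (the fixed point of the Bellman
operator with finite weighted norm) is coordinatewise nondecreasing and discretely
concave in the first coordinate. -/
theorem Vstar_monotone_and_concave
    (γ lam0 lam1 lam2 c0 c1 c2 ρ : ℝ)
    (hγ0 : 0 < γ) (hγ1 : γ < 1)
    (hl0 : 0 < lam0) (hl0' : lam0 < 1)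
    (hl1 : 0 < lam1) (hl1' : lam1 < 1)
    (hl2 : 0 < lam2) (hl2' : lam2 < 1)
    (hc0 : 0 ≤ c0) (hc1 : 0 ≤ c1) (hc2 : 0 ≤ c2)
    (hρ1 : 1 < ρ) (hρ2 : ρ < 1 / γ)
    (Vstar : ℕ → ℕ → ℝ)
    (hnorm : ∃ C : ℝ, ∀ m b : ℕ, 1 ≤ b → b ≤ m → |Vstar m b| ≤ C * ρ ^ m)
    (hfix : ∀ m b : ℕ, 1 ≤ b → b ≤ m →
      Vstar m b = Tbell γ lam0 lam1 lam2 c0 c1 c2 Vstar m b) :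
    (∀ m b m' b' : ℕ, 1 ≤ b → b ≤ m → 1 ≤ b' → b' ≤ m' → m ≤ m' → b ≤ b' →
      Vstar m b ≤ Vstar m' b')
    ∧
    (∀ m b : ℕ, 1 ≤ b → b ≤ m →
      Vstar (m + 2) b - 2 * Vstar (m + 1) b + Vstar m b ≤ 0) := by
  classical
  obtain ⟨C, hC⟩ := hnorm
  set C' : ℝ := max C 0 with hC'def
  have hC'0 : 0 ≤ C' := le_max_right _ _
  have hC' : ∀ m b : ℕ, 1 ≤ b → b ≤ m → |Vstar m b| ≤ C' * ρ ^ m := by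
    intro m b hb hbm
    exact le_trans (hC m b hb hbm)
      (mul_le_mul_of_nonneg_right (le_max_left _ _) (by positivity))
  set W : ℕ → ℕ → ℕ → ℝ := VstarAux.Witer γ lam0 lam1 lam2 c0 c1 c2 with hWdef
  have hγρ0 : 0 ≤ γ * ρ := by positivity
  have hγρ1 : γ * ρ < 1 := by
    have := (lt_div_iff₀ hγ0).mp hρ2
    linarith [mul_comm ρ γ]
  -- properties of the iterates
  have hprop : ∀ n : ℕ, VstarAux.Mono (W n) ∧ VstarAux.Conc (W n) := by
    intro n
    induction n with
    | zero =>
      constructor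
      · intro m b m' b' _ _ _ _ _ _
        simp [hWdef, VstarAux.Witer]
      · intro m b _ _
        simp [hWdef, VstarAux.Witer]
    | succ n ih =>
      constructor
      · exact VstarAux.mono_step hγ0.le hl0.le hl0'.le hl1.le hl1'.le hl2.le hl2'.le ih.1
      · exact VstarAux.conc_step hγ0.le hl0.le hl0'.le hl1.le hl1'.le hl2.le hl2'.le ih.2
  -- convergence bound
  have hconv : ∀ n : ℕ, ∀ m b : ℕ, 1 ≤ b → b ≤ m →
      |W n m b - Vstar m b| ≤ (γ * ρ) ^ n * C' * ρ ^ m := by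
    intro n
    induction n with
    | zero =>
      intro m b hb hbm
      simpa [hWdef, VstarAux.Witer, abs_sub_comm] using hC' m b hb hbm
    | succ n ih =>
      intro m b hb hbm
      have hK : 0 ≤ (γ * ρ) ^ n * C' := by positivity
      have ih' : ∀ m b : ℕ, 1 ≤ b → b ≤ m →
          |W n m b - Vstar m b| ≤ ((γ * ρ) ^ n * C') * ρ ^ m := by
        intro m b hb hbm
        simpa [mul_assoc] using ih m b hb hbm
      have := VstarAux.contract (γ := γ) (ρ := ρ) (c0 := c0) (c1 := c1) (c2 := c2) hγ0.le hρ1.le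
        hl0.le hl0'.le hl1.le hl1'.le hl2.le hl2'.le hK ih' m b hb hbm
      rw [hfix m b hb hbm]
      calc |W (n+1) m b - Tbell γ lam0 lam1 lam2 c0 c1 c2 Vstar m b|
          ≤ γ * ρ * ((γ * ρ) ^ n * C') * ρ ^ m := this
        _ = (γ * ρ) ^ (n+1) * C' * ρ ^ m := by rw [pow_succ]; ring
  -- pointwise tendsto
  have htend : ∀ m b : ℕ, 1 ≤ b → b ≤ m →
      Filter.Tendsto (fun n => W n m b) Filter.atTop (nhds (Vstar m b)) := by
    intro m b hb hbm
    have h0 : Filter.Tendsto (fun n => (γ * ρ) ^ n * (C' * ρ ^ m)) Filter.atTop (nhds 0) := by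
      simpa using (tendsto_pow_atTop_nhds_zero_of_lt_one hγρ0 hγρ1).mul_const (C' * ρ ^ m)
    have h1 : Filter.Tendsto (fun n => W n m b - Vstar m b) Filter.atTop (nhds 0) := by
      refine squeeze_zero_norm (fun n => ?_) h0
      simpa [Real.norm_eq_abs, mul_assoc] using hconv n m b hb hbm
    have := h1.add_const (Vstar m b)
    simpa using this
  constructor
  · intro m b m' b' hb hbm hb' hbm' hmm hbb
    exact le_of_tendsto_of_tendsto' (htend m b hb hbm) (htend m' b' hb' hbm')
      (fun n => (hprop n).1 m b m' b' hb hbm hb' hbm' hmm hbb)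
  · intro m b hb hbm
    have t2 := (htend (m+2) b hb (by omega)).sub
      (((htend (m+1) b hb (by omega)).const_mul 2).sub ((htend m b hb hbm).neg))
    have t : Filter.Tendsto (fun n => W n (m+2) b - 2 * W n (m+1) b + W n m b)
        Filter.atTop (nhds (Vstar (m+2) b - 2 * Vstar (m+1) b + Vstar m b)) := by
      have h2 := ((htend (m+1) b hb (by omega)).const_mul 2)
      have := ((htend (m+2) b hb (by omega)).sub h2).add (htend m b hb hbm)
      simpa using this
    refine le_of_tendsto t (Filter.Eventually.of_forall fun n => ?_)
    have := (hprop n).2 m b hb hbm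
    linarith
end

section
/- For every (m,b) ∈ S one has V★(m+1,b) − V★(m,b) ≥ 1/(1 − γ + γ·λ1). -/
set_option maxHeartbeats 1000000

private lemma min3_add_le {a b c d e f r : ℝ} (h1 : a + r ≤ d) (h2 : b + r ≤ e)
    (h3 : c + r ≤ f) : min a (min b c) + r ≤ min d (min e f) := by
  refine le_min (le_trans ?_ h1) (le_min (le_trans ?_ h2) (le_trans ?_ h3)) <;>
    apply add_le_add_left
  · exact min_le_left _ _
  · exact le_trans (min_le_right _ _) (min_le_left _ _)
  · exact le_trans (min_le_right _ _) (min_le_right _ _)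

private lemma abs_min3_sub_min3 (a b c d e f : ℝ) :
    |min a (min b c) - min d (min e f)| ≤ max |a - d| (max |b - e| |c - f|) :=
  (abs_min_sub_min_le_max _ _ _ _).trans
    (max_le_max le_rfl (abs_min_sub_min_le_max _ _ _ _))

/-- Horizontal increments of the optimal value function are bounded
below by `1/(1 − γ + γλ1)`. -/
theorem Vstar_horizontal_lower_bound
    (γ lam0 lam1 lam2 c0 c1 c2 ρ : ℝ)
    (hγ0 : 0 < γ) (hγ1 : γ < 1)
    (hl0 : 0 < lam0) (hl0' : lam0 < 1)
    (hl1 : 0 < lam1) (hl1' : lam1 < 1)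
    (hl2 : 0 < lam2) (hl2' : lam2 < 1)
    (hc0 : 0 ≤ c0) (hc1 : 0 ≤ c1) (hc2 : 0 ≤ c2)
    (hord1 : lam2 ≤ lam0) (hord2 : lam0 ≤ lam1)
    (hord3 : c0 ≤ c1) (hord4 : c1 ≤ c2)
    (hρ1 : 1 < ρ) (hρ2 : ρ < 1 / γ)
    (Vstar : ℕ → ℕ → ℝ)
    (hnorm : ∃ C : ℝ, ∀ m b : ℕ, 1 ≤ b → b ≤ m → |Vstar m b| ≤ C * ρ ^ m)
    (hfix : ∀ m b : ℕ, 1 ≤ b → b ≤ m →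
      Vstar m b = Tbell γ lam0 lam1 lam2 c0 c1 c2 Vstar m b) :
    ∀ m b : ℕ, 1 ≤ b → b ≤ m →
      Vstar (m + 1) b - Vstar m b ≥ 1 / (1 - γ + γ * lam1) := by
  obtain ⟨C, hC⟩ := hnorm
  have hρ0 : (0:ℝ) < ρ := lt_trans one_pos hρ1
  have hγρ : γ * ρ < 1 := by
    have := (lt_div_iff₀ hγ0).mp hρ2
    linarith
  have hγρ0 : 0 ≤ γ * ρ := le_of_lt (mul_pos hγ0 hρ0)
  have hC0 : 0 ≤ C := by
    have h := hC 1 1 le_rfl le_rfl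
    nlinarith [abs_nonneg (Vstar 1 1), pow_pos hρ0 1]
  obtain ⟨q, hqdef⟩ : ∃ q : ℝ, q = γ * (1 - lam1) := ⟨_, rfl⟩
  have hq0 : 0 ≤ q := by rw [hqdef]; exact le_of_lt (mul_pos hγ0 (by linarith))
  have hq1 : q < 1 := by rw [hqdef]; nlinarith
  have hqγ : q ≤ γ := by rw [hqdef]; nlinarith
  -- the value-iteration sequence
  set T : (ℕ → ℕ → ℝ) → (ℕ → ℕ → ℝ) := Tbell γ lam0 lam1 lam2 c0 c1 c2 with hT
  set W : ℕ → ℕ → ℕ → ℝ := fun n => T^[n] (fun _ _ => 0) with hW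
  have hWsucc : ∀ n, W (n + 1) = T (W n) := fun n => Function.iterate_succ_apply' T n _
  -- the recursive lower bounds a n = (1 - q^n)/(1-q)
  set a : ℕ → ℝ := fun n => (1 - q ^ n) / (1 - q) with ha
  have hqne : (1:ℝ) - q ≠ 0 := by linarith
  have ha0 : ∀ n, 0 ≤ a n := by
    intro n
    apply div_nonneg _ (by linarith)
    have : q ^ n ≤ 1 := pow_le_one₀ hq0 (le_of_lt hq1)
    linarith
  have haS : ∀ n, a (n + 1) = 1 + q * a n := by
    intro n
    show (1 - q ^ (n + 1)) / (1 - q) = 1 + q * ((1 - q ^ n) / (1 - q))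
    field_simp
    ring
  -- Step 1: increments of the iterates
  have hinc : ∀ n, ∀ m b : ℕ, 1 ≤ b → b ≤ m → a n ≤ W n (m + 1) b - W n m b := by
    intro n
    induction n with
    | zero =>
      intro m b hb hbm
      simp [hW, ha]
    | succ n ih =>
      intro m b hb hbm
      rw [hWsucc, haS]
      have key : T (W n) m b + (1 + q * a n) ≤ T (W n) (m + 1) b := by
        have d1 : a n ≤ W n (m + 1 + 1) 1 - W n (m + 1) 1 := ih (m + 1) 1 le_rfl (by omega)
        have d2 : a n ≤ W n (m + 1 + 1) (b + 1) - W n (m + 1) (b + 1) :=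
          ih (m + 1) (b + 1) (by omega) (by omega)
        have hqa : ∀ u v : ℝ, a n ≤ u → a n ≤ v → ∀ lam : ℝ, 0 < lam → lam < 1 →
            q * a n ≤ γ * (lam * u + (1 - lam) * v) := by
          intro u v hu hv lam hla hla'
          have h2 : a n ≤ lam * u + (1 - lam) * v := by
            nlinarith [mul_le_mul_of_nonneg_left hu hla.le,
              mul_le_mul_of_nonneg_left hv (by linarith : (0:ℝ) ≤ 1 - lam)]
          have h3 : γ * a n ≤ γ * (lam * u + (1 - lam) * v) :=
            mul_le_mul_of_nonneg_left h2 hγ0.le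
          have h4 : q * a n ≤ γ * a n := mul_le_mul_of_nonneg_right hqγ (ha0 n)
          linarith
        simp only [hT, Tbell]
        apply min3_add_le
        · -- Q0
          simp only [Q0]
          push_cast
          have := hqa _ _ d1 d2 lam0 hl0 hl0'
          linarith
        · -- Q1
          simp only [Q1]
          push_cast
          have h5 : γ * (1 - lam1) * a n ≤ γ * (1 - lam1) *
              (W n (m + 1 + 1) (b + 1) - W n (m + 1) (b + 1)) :=
            mul_le_mul_of_nonneg_left d2 (by nlinarith)
          have h6 : q * a n = γ * (1 - lam1) * a n := by rw [hqdef]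
          nlinarith
        · -- Q2
          simp only [Q2]
          push_cast
          have h5 : γ * (1 - lam2) * a n ≤ γ * (1 - lam2) *
              (W n (m + 1 + 1) (b + 1) - W n (m + 1) (b + 1)) :=
            mul_le_mul_of_nonneg_left d2 (by nlinarith)
          have h7 : γ * (1 - lam1) * a n ≤ γ * (1 - lam2) * a n :=
            mul_le_mul_of_nonneg_right (by nlinarith) (ha0 n)
          have h6 : q * a n = γ * (1 - lam1) * a n := by rw [hqdef]
          nlinarith
      linarith
  -- Step 2: pointwise convergence of the iterates to Vstar
  have hconv : ∀ n, ∀ m b : ℕ, 1 ≤ b → b ≤ m →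
      |W n m b - Vstar m b| ≤ (γ * ρ) ^ n * (C * ρ ^ m) := by
    intro n
    induction n with
    | zero =>
      intro m b hb hbm
      simpa [hW, abs_sub_comm] using hC m b hb hbm
    | succ n ih =>
      intro m b hb hbm
      rw [hWsucc, hfix m b hb hbm]
      have hbound : ∀ m' b' : ℕ, 1 ≤ b' → b' ≤ m' → m' ≤ m + 1 →
          |W n m' b' - Vstar m' b'| ≤ (γ * ρ) ^ n * (C * ρ ^ (m + 1)) := by
        intro m' b' h1 h2 h3
        refine (ih m' b' h1 h2).trans ?_
        have h5 : ρ ^ m' ≤ ρ ^ (m + 1) := pow_le_pow_right₀ (le_of_lt hρ1) h3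
        exact mul_le_mul_of_nonneg_left
          (mul_le_mul_of_nonneg_left h5 hC0) (pow_nonneg hγρ0 n)
      have hK0 : 0 ≤ (γ * ρ) ^ n * (C * ρ ^ (m + 1)) := by positivity
      have e1 : |W n (m + 1) 1 - Vstar (m + 1) 1| ≤ (γ * ρ) ^ n * (C * ρ ^ (m + 1)) :=
        hbound _ _ le_rfl (by omega) le_rfl
      have e2 : |W n (m + 1) (b + 1) - Vstar (m + 1) (b + 1)| ≤
          (γ * ρ) ^ n * (C * ρ ^ (m + 1)) := hbound _ _ (by omega) (by omega) le_rfl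
      have e3 : |W n (b + 1) (b + 1) - Vstar (b + 1) (b + 1)| ≤
          (γ * ρ) ^ n * (C * ρ ^ (m + 1)) := hbound _ _ (by omega) le_rfl (by omega)
      have e4 : |W n (b + 1) 1 - Vstar (b + 1) 1| ≤ (γ * ρ) ^ n * (C * ρ ^ (m + 1)) :=
        hbound _ _ le_rfl (by omega) (by omega)
      have habs : ∀ (lam c K : ℝ) (x y x' y' : ℝ), 0 < lam → lam < 1 → 0 ≤ K →
          |x - x'| ≤ K → |y - y'| ≤ K →
          |((m:ℝ) + c + γ * (lam * x + (1 - lam) * y)) -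
            ((m:ℝ) + c + γ * (lam * x' + (1 - lam) * y'))| ≤ γ * K := by
        intro lam c K x y x' y' hl hl' hK hx hy
        have heq : ((m:ℝ) + c + γ * (lam * x + (1 - lam) * y)) -
            ((m:ℝ) + c + γ * (lam * x' + (1 - lam) * y')) =
            γ * (lam * (x - x') + (1 - lam) * (y - y')) := by ring
        rw [heq, abs_mul, abs_of_pos hγ0]
        have h5 : |lam * (x - x') + (1 - lam) * (y - y')| ≤
            lam * |x - x'| + (1 - lam) * |y - y'| := by
          refine (abs_add_le _ _).trans ?_
          rw [abs_mul, abs_mul, abs_of_pos hl, abs_of_pos (by linarith : (0:ℝ) < 1 - lam)]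
        have h6 : lam * |x - x'| + (1 - lam) * |y - y'| ≤ K := by
          nlinarith [mul_le_mul_of_nonneg_left hx hl.le,
            mul_le_mul_of_nonneg_left hy (by linarith : (0:ℝ) ≤ 1 - lam)]
        nlinarith
      have hfinal : |T (W n) m b - T Vstar m b| ≤ γ * ((γ * ρ) ^ n * (C * ρ ^ (m + 1))) := by
        simp only [hT, Tbell]
        refine (abs_min3_sub_min3 _ _ _ _ _ _).trans ?_
        refine max_le ?_ (max_le ?_ ?_)
        · exact habs lam0 c0 _ _ _ _ _ hl0 hl0' hK0 e1 e2
        · exact habs lam1 c1 _ _ _ _ _ hl1 hl1' hK0 e3 e2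
        · exact habs lam2 c2 _ _ _ _ _ hl2 hl2' hK0 e4 e2
      refine hfinal.trans (le_of_eq ?_)
      ring
  -- Step 3: pass to the limit
  intro m b hb hbm
  have hlim : ∀ m' b' : ℕ, 1 ≤ b' → b' ≤ m' →
      Filter.Tendsto (fun n => W n m' b') Filter.atTop (nhds (Vstar m' b')) := by
    intro m' b' h1 h2
    have h0 : Filter.Tendsto (fun n => (γ * ρ) ^ n * (C * ρ ^ m')) Filter.atTop (nhds 0) := by
      simpa using (tendsto_pow_atTop_nhds_zero_of_lt_one hγρ0 hγρ).mul_const (C * ρ ^ m')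
    have hsq : Filter.Tendsto (fun n => W n m' b' - Vstar m' b') Filter.atTop (nhds 0) := by
      apply squeeze_zero_norm (fun n => ?_) h0
      simpa [Real.norm_eq_abs] using hconv n m' b' h1 h2
    have := hsq.add_const (Vstar m' b')
    simpa using this
  have hd : Filter.Tendsto (fun n => W n (m + 1) b - W n m b) Filter.atTop
      (nhds (Vstar (m + 1) b - Vstar m b)) :=
    (hlim (m + 1) b hb (by omega)).sub (hlim m b hb hbm)
  have haT : Filter.Tendsto a Filter.atTop (nhds (1 / (1 - q))) := by
    have h0 : Filter.Tendsto (fun n : ℕ => q ^ n) Filter.atTop (nhds 0) :=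
      tendsto_pow_atTop_nhds_zero_of_lt_one hq0 hq1
    have h1 : Filter.Tendsto (fun n : ℕ => (1 - q ^ n) / (1 - q)) Filter.atTop
        (nhds ((1 - 0) / (1 - q))) := (tendsto_const_nhds.sub h0).div_const _
    rw [ha]
    simpa using h1
  have hle : 1 / (1 - q) ≤ Vstar (m + 1) b - Vstar m b :=
    le_of_tendsto_of_tendsto' haT hd (fun n => hinc n m b hb hbm)
  have heq : 1 - γ + γ * lam1 = 1 - q := by rw [hqdef]; ring
  rw [ge_iff_le, heq]
  exact hle
end

section
/- For every (m,b) ∈ S and every (m̃,b̃) ∈ S such that 0 ≤ m̃ − m ≤ 1 and 0 ≤ b̃ − b ≤ 1, one has 0 ≤ V★(m̃,b̃) − V★(m,b) ≤ 1/(1 − γ). -/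
/-- Value-iteration sequence starting from `0`. -/
noncomputable def iterV (γ lam0 lam1 lam2 c0 c1 c2 : ℝ) : ℕ → ℕ → ℕ → ℝ
  | 0 => fun _ _ => 0
  | n + 1 => Tbell γ lam0 lam1 lam2 c0 c1 c2 (iterV γ lam0 lam1 lam2 c0 c1 c2 n)

lemma min3_le_min3_add (a b c a' b' c' D : ℝ)
    (ha : a ≤ a' + D) (hb : b ≤ b' + D) (hc : c ≤ c' + D) :
    min a (min b c) ≤ min a' (min b' c') + D := by
  have h2 : min (b' + D) (c' + D) = min b' c' + D := min_add_add_right b' c' D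
  have h1 : min (a' + D) (min b' c' + D) = min a' (min b' c') + D :=
    min_add_add_right a' (min b' c') D
  calc min a (min b c) ≤ min (a' + D) (min (b' + D) (c' + D)) :=
        min_le_min ha (min_le_min hb hc)
    _ = min a' (min b' c') + D := by rw [h2, h1]

lemma abs_min3_sub_min3_s6 (a b c a' b' c' D : ℝ)
    (ha : |a - a'| ≤ D) (hb : |b - b'| ≤ D) (hc : |c - c'| ≤ D) :
    |min a (min b c) - min a' (min b' c')| ≤ D := by
  rw [abs_le] at ha hb hc ⊢
  constructor
  · have := min3_le_min3_add a' b' c' a b c D (by linarith [ha.2]) (by linarith [hb.2])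
      (by linarith [hc.2])
    linarith
  · have := min3_le_min3_add a b c a' b' c' D (by linarith [ha.1]) (by linarith [hb.1])
      (by linarith [hc.1])
    linarith

lemma combo_nonneg (γ l d1 d2 : ℝ) (hγ : 0 ≤ γ) (hl : 0 ≤ l) (hl' : l ≤ 1)
    (h1 : 0 ≤ d1) (h2 : 0 ≤ d2) : 0 ≤ γ * (l * d1 + (1 - l) * d2) := by
  have := mul_nonneg hl h1
  have := mul_nonneg (by linarith : (0:ℝ) ≤ 1 - l) h2
  have : 0 ≤ l * d1 + (1 - l) * d2 := by linarith
  exact mul_nonneg hγ this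

lemma combo_le (γ l K d1 d2 : ℝ) (hγ : 0 ≤ γ) (hl : 0 ≤ l) (hl' : l ≤ 1)
    (h1 : d1 ≤ K) (h2 : d2 ≤ K) : γ * (l * d1 + (1 - l) * d2) ≤ γ * K := by
  have a1 : l * d1 ≤ l * K := mul_le_mul_of_nonneg_left h1 hl
  have a2 : (1 - l) * d2 ≤ (1 - l) * K :=
    mul_le_mul_of_nonneg_left h2 (by linarith : (0:ℝ) ≤ 1 - l)
  have : l * d1 + (1 - l) * d2 ≤ K := by nlinarith
  exact mul_le_mul_of_nonneg_left this hγ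

lemma combo_abs (γ l D d1 d2 : ℝ) (hγ : 0 ≤ γ) (hl : 0 ≤ l) (hl' : l ≤ 1)
    (h1 : |d1| ≤ D) (h2 : |d2| ≤ D) : |γ * (l * d1 + (1 - l) * d2)| ≤ γ * D := by
  rw [abs_le] at h1 h2 ⊢
  constructor
  · nlinarith [mul_nonneg hγ (mul_nonneg hl (by linarith : (0:ℝ) ≤ d1 + D)),
      mul_nonneg hγ (mul_nonneg (by linarith : (0:ℝ) ≤ 1 - l) (by linarith : (0:ℝ) ≤ d2 + D))]
  · nlinarith [mul_nonneg hγ (mul_nonneg hl (by linarith : (0:ℝ) ≤ D - d1)),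
      mul_nonneg hγ (mul_nonneg (by linarith : (0:ℝ) ≤ 1 - l) (by linarith : (0:ℝ) ≤ D - d2))]

/-- One step of the Bellman operator preserves the increment bounds (with Lipschitz
constant `1 + γ K`). -/
lemma Tbell_step (γ lam0 lam1 lam2 c0 c1 c2 K : ℝ)
    (hγ0 : 0 ≤ γ)
    (h0 : 0 ≤ lam0) (h0' : lam0 ≤ 1)
    (h1 : 0 ≤ lam1) (h1' : lam1 ≤ 1)
    (h2 : 0 ≤ lam2) (h2' : lam2 ≤ 1)
    (V : ℕ → ℕ → ℝ)
    (hV : ∀ m b mt bt : ℕ, 1 ≤ b → b ≤ m → 1 ≤ bt → bt ≤ mt →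
      m ≤ mt → mt ≤ m + 1 → b ≤ bt → bt ≤ b + 1 →
      0 ≤ V mt bt - V m b ∧ V mt bt - V m b ≤ K) :
    ∀ m b mt bt : ℕ, 1 ≤ b → b ≤ m → 1 ≤ bt → bt ≤ mt →
      m ≤ mt → mt ≤ m + 1 → b ≤ bt → bt ≤ b + 1 →
      0 ≤ Tbell γ lam0 lam1 lam2 c0 c1 c2 V mt bt - Tbell γ lam0 lam1 lam2 c0 c1 c2 V m b ∧
        Tbell γ lam0 lam1 lam2 c0 c1 c2 V mt bt - Tbell γ lam0 lam1 lam2 c0 c1 c2 V m b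
          ≤ 1 + γ * K := by
  intro m b mt bt hb hbm hbt hbtmt hmmt hmt1 hbbt hbt1
  have hA := hV (m+1) 1 (mt+1) 1 le_rfl (by omega) le_rfl (by omega) (by omega) (by omega)
    le_rfl (by omega)
  have hB := hV (m+1) (b+1) (mt+1) (bt+1) (by omega) (by omega) (by omega) (by omega)
    (by omega) (by omega) (by omega) (by omega)
  have hCc := hV (b+1) (b+1) (bt+1) (bt+1) (by omega) le_rfl (by omega) le_rfl
    (by omega) (by omega) (by omega) (by omega)
  have hD := hV (b+1) 1 (bt+1) 1 le_rfl (by omega) le_rfl (by omega) (by omega) (by omega)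
    le_rfl (by omega)
  have hm0 : (m : ℝ) ≤ (mt : ℝ) := by exact_mod_cast hmmt
  have hm1 : (mt : ℝ) ≤ (m : ℝ) + 1 := by exact_mod_cast hmt1
  have eq0 : Q0 γ lam0 c0 V mt bt - Q0 γ lam0 c0 V m b
      = ((mt : ℝ) - (m : ℝ)) + γ * (lam0 * (V (mt+1) 1 - V (m+1) 1)
        + (1 - lam0) * (V (mt+1) (bt+1) - V (m+1) (b+1))) := by
    unfold Q0; ring
  have eq1 : Q1 γ lam1 c1 V mt bt - Q1 γ lam1 c1 V m b
      = ((mt : ℝ) - (m : ℝ)) + γ * (lam1 * (V (bt+1) (bt+1) - V (b+1) (b+1))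
        + (1 - lam1) * (V (mt+1) (bt+1) - V (m+1) (b+1))) := by
    unfold Q1; ring
  have eq2 : Q2 γ lam2 c2 V mt bt - Q2 γ lam2 c2 V m b
      = ((mt : ℝ) - (m : ℝ)) + γ * (lam2 * (V (bt+1) 1 - V (b+1) 1)
        + (1 - lam2) * (V (mt+1) (bt+1) - V (m+1) (b+1))) := by
    unfold Q2; ring
  -- Q0 bounds
  have q0l : 0 ≤ Q0 γ lam0 c0 V mt bt - Q0 γ lam0 c0 V m b := by
    have h := combo_nonneg γ lam0 (V (mt+1) 1 - V (m+1) 1)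
      (V (mt+1) (bt+1) - V (m+1) (b+1)) hγ0 h0 h0' hA.1 hB.1
    linarith [eq0, h, hm0]
  have q0u : Q0 γ lam0 c0 V mt bt - Q0 γ lam0 c0 V m b ≤ 1 + γ * K := by
    have h := combo_le γ lam0 K (V (mt+1) 1 - V (m+1) 1)
      (V (mt+1) (bt+1) - V (m+1) (b+1)) hγ0 h0 h0' hA.2 hB.2
    linarith [eq0, h, hm1]
  -- Q1 bounds
  have q1l : 0 ≤ Q1 γ lam1 c1 V mt bt - Q1 γ lam1 c1 V m b := by
    have h := combo_nonneg γ lam1 (V (bt+1) (bt+1) - V (b+1) (b+1))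
      (V (mt+1) (bt+1) - V (m+1) (b+1)) hγ0 h1 h1' hCc.1 hB.1
    linarith [eq1, h, hm0]
  have q1u : Q1 γ lam1 c1 V mt bt - Q1 γ lam1 c1 V m b ≤ 1 + γ * K := by
    have h := combo_le γ lam1 K (V (bt+1) (bt+1) - V (b+1) (b+1))
      (V (mt+1) (bt+1) - V (m+1) (b+1)) hγ0 h1 h1' hCc.2 hB.2
    linarith [eq1, h, hm1]
  -- Q2 bounds
  have q2l : 0 ≤ Q2 γ lam2 c2 V mt bt - Q2 γ lam2 c2 V m b := by
    have h := combo_nonneg γ lam2 (V (bt+1) 1 - V (b+1) 1)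
      (V (mt+1) (bt+1) - V (m+1) (b+1)) hγ0 h2 h2' hD.1 hB.1
    linarith [eq2, h, hm0]
  have q2u : Q2 γ lam2 c2 V mt bt - Q2 γ lam2 c2 V m b ≤ 1 + γ * K := by
    have h := combo_le γ lam2 K (V (bt+1) 1 - V (b+1) 1)
      (V (mt+1) (bt+1) - V (m+1) (b+1)) hγ0 h2 h2' hD.2 hB.2
    linarith [eq2, h, hm1]
  constructor
  · have : Tbell γ lam0 lam1 lam2 c0 c1 c2 V m b ≤ Tbell γ lam0 lam1 lam2 c0 c1 c2 V mt bt := by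
      unfold Tbell
      exact min_le_min (by linarith) (min_le_min (by linarith) (by linarith))
    linarith
  · have : Tbell γ lam0 lam1 lam2 c0 c1 c2 V mt bt
        ≤ Tbell γ lam0 lam1 lam2 c0 c1 c2 V m b + (1 + γ * K) := by
      unfold Tbell
      exact min3_le_min3_add _ _ _ _ _ _ _ (by linarith) (by linarith) (by linarith)
    linarith

/-- Local one-step increments of the optimal value function lie
between `0` and `1/(1 − γ)`. -/
theorem Vstar_local_upper_bound
    (γ lam0 lam1 lam2 c0 c1 c2 ρ : ℝ)
    (hγ0 : 0 < γ) (hγ1 : γ < 1)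
    (hl0 : 0 < lam0) (hl0' : lam0 < 1)
    (hl1 : 0 < lam1) (hl1' : lam1 < 1)
    (hl2 : 0 < lam2) (hl2' : lam2 < 1)
    (hc0 : 0 ≤ c0) (hc1 : 0 ≤ c1) (hc2 : 0 ≤ c2)
    (hρ1 : 1 < ρ) (hρ2 : ρ < 1 / γ)
    (Vstar : ℕ → ℕ → ℝ)
    (hnorm : ∃ C : ℝ, ∀ m b : ℕ, 1 ≤ b → b ≤ m → |Vstar m b| ≤ C * ρ ^ m)
    (hfix : ∀ m b : ℕ, 1 ≤ b → b ≤ m →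
      Vstar m b = Tbell γ lam0 lam1 lam2 c0 c1 c2 Vstar m b) :
    ∀ m b mt bt : ℕ, 1 ≤ b → b ≤ m → 1 ≤ bt → bt ≤ mt →
      m ≤ mt → mt ≤ m + 1 → b ≤ bt → bt ≤ b + 1 →
      0 ≤ Vstar mt bt - Vstar m b ∧ Vstar mt bt - Vstar m b ≤ 1 / (1 - γ) := by
  intro m b mt bt hb hbm hbt hbtmt hmmt hmt1 hbbt hbt1
  obtain ⟨C, hC⟩ := hnorm
  have hρ0 : (0:ℝ) < ρ := by linarith
  have hC0 : 0 ≤ C := by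
    have h1 := hC 1 1 le_rfl le_rfl
    have h2 := abs_nonneg (Vstar 1 1)
    nlinarith [pow_pos hρ0 1]
  have h1γ : (0:ℝ) < 1 - γ := by linarith
  have hK0 : (0:ℝ) ≤ 1 / (1 - γ) := le_of_lt (div_pos one_pos h1γ)
  have hgr0 : (0:ℝ) ≤ γ * ρ := by positivity
  have hgr1 : γ * ρ < 1 := by
    have := (lt_div_iff₀ hγ0).1 hρ2
    nlinarith
  -- monotonicity/Lipschitz bounds for iterates
  have hfix' : 1 + γ * (1 / (1 - γ)) = 1 / (1 - γ) := by field_simp; ring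
  have mono : ∀ n : ℕ, ∀ m b mt bt : ℕ, 1 ≤ b → b ≤ m → 1 ≤ bt → bt ≤ mt →
      m ≤ mt → mt ≤ m + 1 → b ≤ bt → bt ≤ b + 1 →
      0 ≤ iterV γ lam0 lam1 lam2 c0 c1 c2 n mt bt - iterV γ lam0 lam1 lam2 c0 c1 c2 n m b ∧
        iterV γ lam0 lam1 lam2 c0 c1 c2 n mt bt - iterV γ lam0 lam1 lam2 c0 c1 c2 n m b
          ≤ 1 / (1 - γ) := by
    intro n
    induction n with
    | zero =>
      intro m b mt bt _ _ _ _ _ _ _ _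
      simp only [iterV, sub_self]
      exact ⟨le_rfl, hK0⟩
    | succ n ih =>
      intro m b mt bt hb hbm hbt hbtmt hmmt hmt1 hbbt hbt1
      have := Tbell_step γ lam0 lam1 lam2 c0 c1 c2 (1 / (1 - γ)) (le_of_lt hγ0)
        (le_of_lt hl0) (le_of_lt hl0') (le_of_lt hl1) (le_of_lt hl1')
        (le_of_lt hl2) (le_of_lt hl2') (iterV γ lam0 lam1 lam2 c0 c1 c2 n) ih
        m b mt bt hb hbm hbt hbtmt hmmt hmt1 hbbt hbt1
      rw [hfix'] at this
      exact this
  -- error bound for iterates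
  have err : ∀ n : ℕ, ∀ m b : ℕ, 1 ≤ b → b ≤ m →
      |iterV γ lam0 lam1 lam2 c0 c1 c2 n m b - Vstar m b| ≤ (γ * ρ) ^ n * (C * ρ ^ m) := by
    intro n
    induction n with
    | zero =>
      intro m b h1 h2
      simpa [iterV] using hC m b h1 h2
    | succ n ih =>
      intro m b h1 h2
      have key : ∀ m' b' : ℕ, 1 ≤ b' → b' ≤ m' → m' ≤ m + 1 →
          |iterV γ lam0 lam1 lam2 c0 c1 c2 n m' b' - Vstar m' b'|
            ≤ (γ * ρ) ^ n * (C * ρ ^ (m + 1)) := by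
        intro m' b' hb' hbm' hm'
        have h := ih m' b' hb' hbm'
        have hpow : ρ ^ m' ≤ ρ ^ (m + 1) := pow_le_pow_right₀ (le_of_lt hρ1) hm'
        have hnn : (0:ℝ) ≤ (γ * ρ) ^ n := pow_nonneg hgr0 n
        calc |iterV γ lam0 lam1 lam2 c0 c1 c2 n m' b' - Vstar m' b'|
            ≤ (γ * ρ) ^ n * (C * ρ ^ m') := h
          _ ≤ (γ * ρ) ^ n * (C * ρ ^ (m + 1)) := by
              apply mul_le_mul_of_nonneg_left _ hnn
              exact mul_le_mul_of_nonneg_left hpow hC0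
      set W := iterV γ lam0 lam1 lam2 c0 c1 c2 n with hW
      set D := (γ * ρ) ^ n * (C * ρ ^ (m + 1)) with hDdef
      have hA := key (m+1) 1 le_rfl (by omega) (by omega)
      have hB := key (m+1) (b+1) (by omega) (by omega) (by omega)
      have hCc := key (b+1) (b+1) (by omega) le_rfl (by omega)
      have hDD := key (b+1) 1 le_rfl (by omega) (by omega)
      have e0 : |Q0 γ lam0 c0 W m b - Q0 γ lam0 c0 Vstar m b| ≤ γ * D := by
        have h := combo_abs γ lam0 D (W (m+1) 1 - Vstar (m+1) 1)
          (W (m+1) (b+1) - Vstar (m+1) (b+1)) (le_of_lt hγ0) (le_of_lt hl0) (le_of_lt hl0')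
          hA hB
        have e : Q0 γ lam0 c0 W m b - Q0 γ lam0 c0 Vstar m b
            = γ * (lam0 * (W (m+1) 1 - Vstar (m+1) 1)
              + (1 - lam0) * (W (m+1) (b+1) - Vstar (m+1) (b+1))) := by
          unfold Q0; ring
        rw [e]; exact h
      have e1 : |Q1 γ lam1 c1 W m b - Q1 γ lam1 c1 Vstar m b| ≤ γ * D := by
        have h := combo_abs γ lam1 D (W (b+1) (b+1) - Vstar (b+1) (b+1))
          (W (m+1) (b+1) - Vstar (m+1) (b+1)) (le_of_lt hγ0) (le_of_lt hl1) (le_of_lt hl1')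
          hCc hB
        have e : Q1 γ lam1 c1 W m b - Q1 γ lam1 c1 Vstar m b
            = γ * (lam1 * (W (b+1) (b+1) - Vstar (b+1) (b+1))
              + (1 - lam1) * (W (m+1) (b+1) - Vstar (m+1) (b+1))) := by
          unfold Q1; ring
        rw [e]; exact h
      have e2 : |Q2 γ lam2 c2 W m b - Q2 γ lam2 c2 Vstar m b| ≤ γ * D := by
        have h := combo_abs γ lam2 D (W (b+1) 1 - Vstar (b+1) 1)
          (W (m+1) (b+1) - Vstar (m+1) (b+1)) (le_of_lt hγ0) (le_of_lt hl2) (le_of_lt hl2')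
          hDD hB
        have e : Q2 γ lam2 c2 W m b - Q2 γ lam2 c2 Vstar m b
            = γ * (lam2 * (W (b+1) 1 - Vstar (b+1) 1)
              + (1 - lam2) * (W (m+1) (b+1) - Vstar (m+1) (b+1))) := by
          unfold Q2; ring
        rw [e]; exact h
      have habs : |Tbell γ lam0 lam1 lam2 c0 c1 c2 W m b
          - Tbell γ lam0 lam1 lam2 c0 c1 c2 Vstar m b| ≤ γ * D := by
        unfold Tbell
        exact abs_min3_sub_min3_s6 _ _ _ _ _ _ _ e0 e1 e2
      have efinal : γ * D = (γ * ρ) ^ (n + 1) * (C * ρ ^ m) := by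
        rw [hDdef, pow_succ, pow_succ]; ring
      have step : iterV γ lam0 lam1 lam2 c0 c1 c2 (n+1) m b
          = Tbell γ lam0 lam1 lam2 c0 c1 c2 W m b := rfl
      rw [step, hfix m b h1 h2, ← efinal]
      exact habs
  -- pointwise convergence
  have ht : Filter.Tendsto (fun n : ℕ => (γ * ρ) ^ n) Filter.atTop (nhds 0) :=
    tendsto_pow_atTop_nhds_zero_of_lt_one hgr0 hgr1
  have conv : ∀ m b : ℕ, 1 ≤ b → b ≤ m →
      Filter.Tendsto (fun n => iterV γ lam0 lam1 lam2 c0 c1 c2 n m b)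
        Filter.atTop (nhds (Vstar m b)) := by
    intro m b h1 h2
    have hz : Filter.Tendsto (fun n : ℕ => (γ * ρ) ^ n * (C * ρ ^ m))
        Filter.atTop (nhds 0) := by
      simpa using ht.mul_const (C * ρ ^ m)
    have hzz : Filter.Tendsto
        (fun n => iterV γ lam0 lam1 lam2 c0 c1 c2 n m b - Vstar m b)
        Filter.atTop (nhds 0) := by
      apply squeeze_zero_norm _ hz
      intro n
      simpa [Real.norm_eq_abs] using err n m b h1 h2
    have := hzz.add_const (Vstar m b)
    simpa using this
  have d : Filter.Tendsto
      (fun n => iterV γ lam0 lam1 lam2 c0 c1 c2 n mt bt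
        - iterV γ lam0 lam1 lam2 c0 c1 c2 n m b)
      Filter.atTop (nhds (Vstar mt bt - Vstar m b)) :=
    (conv mt bt hbt hbtmt).sub (conv m b hb hbm)
  constructor
  · exact ge_of_tendsto' d
      (fun n => (mono n m b mt bt hb hbm hbt hbtmt hmmt hmt1 hbbt hbt1).1)
  · exact le_of_tendsto' d
      (fun n => (mono n m b mt bt hb hbm hbt hbtmt hmmt hmt1 hbbt hbt1).2)
end

section
/- For every α ≥ 1, the sensing action is optimal at the diagonal state (α,α): Q0(V★)(α,α) ≤ Q1(V★)(α,α) and Q0(V★)(α,α) ≤ Q2(V★)(α,α); in particular V★(α,α) = Q0(V★)(α,α). -/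
set_option maxHeartbeats 1000000


/-- The sensing action (`u = 0`) is optimal at every diagonal state
`(α, α)` with `α ≥ 1`. -/
theorem sensing_optimal_on_diagonal
    (γ lam0 lam1 lam2 c0 c1 c2 ρ : ℝ)
    (hγ0 : 0 < γ) (hγ1 : γ < 1)
    (hl0 : 0 < lam0) (hl0' : lam0 < 1)
    (hl1 : 0 < lam1) (hl1' : lam1 < 1)
    (hl2 : 0 < lam2) (hl2' : lam2 < 1)
    (hc0 : 0 ≤ c0) (hc1 : 0 ≤ c1) (hc2 : 0 ≤ c2)
    (hord1 : lam2 ≤ lam0) (hord2 : lam0 ≤ lam1)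
    (hord3 : c0 ≤ c1) (hord4 : c1 ≤ c2)
    (hρ1 : 1 < ρ) (hρ2 : ρ < 1 / γ)
    (Vstar : ℕ → ℕ → ℝ)
    (hnorm : ∃ C : ℝ, ∀ m b : ℕ, 1 ≤ b → b ≤ m → |Vstar m b| ≤ C * ρ ^ m)
    (hfix : ∀ m b : ℕ, 1 ≤ b → b ≤ m →
      Vstar m b = Tbell γ lam0 lam1 lam2 c0 c1 c2 Vstar m b) :
    ∀ α : ℕ, 1 ≤ α →
      Q0 γ lam0 c0 Vstar α α ≤ Q1 γ lam1 c1 Vstar α α ∧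
      Q0 γ lam0 c0 Vstar α α ≤ Q2 γ lam2 c2 Vstar α α ∧
      Vstar α α = Q0 γ lam0 c0 Vstar α α := by
  obtain ⟨C, hC⟩ := hnorm
  have hρ0 : (0:ℝ) < ρ := lt_trans one_pos hρ1
  have hγρ0 : (0:ℝ) < γ * ρ := mul_pos hγ0 hρ0
  have hγρ1 : γ * ρ < 1 := by
    have := (lt_div_iff₀ hγ0).mp hρ2
    linarith [this]
  have hC0 : 0 ≤ C := by
    have h1 := hC 1 1 le_rfl le_rfl
    have h2 : (0:ℝ) ≤ C * ρ ^ 1 := le_trans (abs_nonneg _) h1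
    have := pow_pos hρ0 1
    nlinarith
  -- key monotonicity bound, by induction on n
  have key : ∀ n : ℕ, ∀ m b m' b' : ℕ, 1 ≤ b → b ≤ m → 1 ≤ b' → b' ≤ m' →
      m ≤ m' → b ≤ b' →
      Vstar m b - Vstar m' b' ≤ (γ * ρ) ^ n * (2 * C) * ρ ^ m' := by
    intro n
    induction n with
    | zero =>
      intro m b m' b' hb hbm hb' hbm' hmm hbb
      have h1 := hC m b hb hbm
      have h2 := hC m' b' hb' hbm'
      have hpow : ρ ^ m ≤ ρ ^ m' := pow_le_pow_right₀ (le_of_lt hρ1) hmm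
      have ha1 := abs_le.mp h1
      have ha2 := abs_le.mp h2
      simp only [pow_zero, one_mul]
      nlinarith [pow_pos hρ0 m', pow_pos hρ0 m]
    | succ n ih =>
      intro m b m' b' hb hbm hb' hbm' hmm hbb
      set K : ℝ := (γ * ρ) ^ n * (2 * C) with hK
      have hKnn : 0 ≤ K := by positivity
      have hmmR : (m:ℝ) ≤ (m':ℝ) := Nat.cast_le.mpr hmm
      have hpow' : ρ ^ (b' + 1) ≤ ρ ^ (m' + 1) :=
        pow_le_pow_right₀ (le_of_lt hρ1) (by omega)
      have hVm := hfix m b hb hbm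
      have hVm' := hfix m' b' hb' hbm'
      have hstep : ((γ * ρ) ^ (n+1) * (2 * C)) * ρ ^ m'
          = γ * (K * ρ ^ (m' + 1)) := by
        rw [hK]; ring
      rw [hstep]
      -- V m b is ≤ each Q at (m,b)
      have hle0 : Vstar m b ≤ Q0 γ lam0 c0 Vstar m b := by
        rw [hVm]; exact min_le_left _ _
      have hle1 : Vstar m b ≤ Q1 γ lam1 c1 Vstar m b := by
        rw [hVm]; exact le_trans (min_le_right _ _) (min_le_left _ _)
      have hle2 : Vstar m b ≤ Q2 γ lam2 c2 Vstar m b := by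
        rw [hVm]; exact le_trans (min_le_right _ _) (min_le_right _ _)
      rcases min_choice (Q0 γ lam0 c0 Vstar m' b')
          (min (Q1 γ lam1 c1 Vstar m' b') (Q2 γ lam2 c2 Vstar m' b')) with h | h
      · -- minimizer at (m',b') is Q0
        have heq : Vstar m' b' = Q0 γ lam0 c0 Vstar m' b' := by
          rw [hVm']; exact h
        have d1 := ih (m+1) 1 (m'+1) 1 le_rfl (by omega) le_rfl (by omega)
          (by omega) le_rfl
        have d2 := ih (m+1) (b+1) (m'+1) (b'+1) (by omega) (by omega)
          (by omega) (by omega) (by omega) (by omega)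
        have e1 : γ * (lam0 * (Vstar (m+1) 1 - Vstar (m'+1) 1))
            ≤ γ * (lam0 * (K * ρ ^ (m'+1))) :=
          mul_le_mul_of_nonneg_left (mul_le_mul_of_nonneg_left d1 hl0.le) hγ0.le
        have e2 : γ * ((1 - lam0) * (Vstar (m+1) (b+1) - Vstar (m'+1) (b'+1)))
            ≤ γ * ((1 - lam0) * (K * ρ ^ (m'+1))) :=
          mul_le_mul_of_nonneg_left (mul_le_mul_of_nonneg_left d2 (by linarith)) hγ0.le
        rw [heq]
        simp only [Q0] at hle0 ⊢
        push_cast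
        linarith [e1, e2, hmmR]
      · rcases min_choice (Q1 γ lam1 c1 Vstar m' b') (Q2 γ lam2 c2 Vstar m' b')
            with h2 | h2
        · -- minimizer is Q1
          have heq : Vstar m' b' = Q1 γ lam1 c1 Vstar m' b' := by
            rw [hVm', Tbell, h, h2]
          have d1 := ih (b+1) (b+1) (b'+1) (b'+1) (by omega) le_rfl (by omega)
            le_rfl (by omega) (by omega)
          have d2 := ih (m+1) (b+1) (m'+1) (b'+1) (by omega) (by omega)
            (by omega) (by omega) (by omega) (by omega)
          have d1' : Vstar (b+1) (b+1) - Vstar (b'+1) (b'+1) ≤ K * ρ ^ (m'+1) :=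
            le_trans d1 (mul_le_mul_of_nonneg_left hpow' hKnn)
          have e1 : γ * (lam1 * (Vstar (b+1) (b+1) - Vstar (b'+1) (b'+1)))
              ≤ γ * (lam1 * (K * ρ ^ (m'+1))) :=
            mul_le_mul_of_nonneg_left (mul_le_mul_of_nonneg_left d1' hl1.le) hγ0.le
          have e2 : γ * ((1 - lam1) * (Vstar (m+1) (b+1) - Vstar (m'+1) (b'+1)))
              ≤ γ * ((1 - lam1) * (K * ρ ^ (m'+1))) :=
            mul_le_mul_of_nonneg_left (mul_le_mul_of_nonneg_left d2 (by linarith)) hγ0.le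
          rw [heq]
          simp only [Q1] at hle1 ⊢
          push_cast
          linarith [e1, e2, hmmR]
        · -- minimizer is Q2
          have heq : Vstar m' b' = Q2 γ lam2 c2 Vstar m' b' := by
            rw [hVm', Tbell, h, h2]
          have d1 := ih (b+1) 1 (b'+1) 1 le_rfl (by omega) le_rfl (by omega)
            (by omega) le_rfl
          have d2 := ih (m+1) (b+1) (m'+1) (b'+1) (by omega) (by omega)
            (by omega) (by omega) (by omega) (by omega)
          have d1' : Vstar (b+1) 1 - Vstar (b'+1) 1 ≤ K * ρ ^ (m'+1) :=
            le_trans d1 (mul_le_mul_of_nonneg_left hpow' hKnn)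
          have e1 : γ * (lam2 * (Vstar (b+1) 1 - Vstar (b'+1) 1))
              ≤ γ * (lam2 * (K * ρ ^ (m'+1))) :=
            mul_le_mul_of_nonneg_left (mul_le_mul_of_nonneg_left d1' hl2.le) hγ0.le
          have e2 : γ * ((1 - lam2) * (Vstar (m+1) (b+1) - Vstar (m'+1) (b'+1)))
              ≤ γ * ((1 - lam2) * (K * ρ ^ (m'+1))) :=
            mul_le_mul_of_nonneg_left (mul_le_mul_of_nonneg_left d2 (by linarith)) hγ0.le
          rw [heq]
          simp only [Q2] at hle2 ⊢
          push_cast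
          linarith [e1, e2, hmmR]
  -- monotonicity of Vstar
  have mono : ∀ m b m' b' : ℕ, 1 ≤ b → b ≤ m → 1 ≤ b' → b' ≤ m' →
      m ≤ m' → b ≤ b' → Vstar m b ≤ Vstar m' b' := by
    intro m b m' b' hb hbm hb' hbm' hmm hbb
    by_contra hcon
    push_neg at hcon
    set d : ℝ := Vstar m b - Vstar m' b' with hd
    have hd0 : 0 < d := by rw [hd]; linarith
    have hM : (0:ℝ) ≤ 2 * C * ρ ^ m' := by positivity
    rcases eq_or_lt_of_le hM with hM0 | hMpos
    · have := key 0 m b m' b' hb hbm hb' hbm' hmm hbb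
      simp only [pow_zero, one_mul] at this
      nlinarith
    · obtain ⟨n, hn⟩ := exists_pow_lt_of_lt_one (div_pos hd0 hMpos) hγρ1
      have hkey := key n m b m' b' hb hbm hb' hbm' hmm hbb
      rw [lt_div_iff₀ hMpos] at hn
      nlinarith [hkey, hn]
  intro α hα
  have hmono : Vstar (α+1) 1 ≤ Vstar (α+1) (α+1) :=
    mono (α+1) 1 (α+1) (α+1) le_rfl (by omega) (by omega) le_rfl le_rfl (by omega)
  have hQ01 : Q0 γ lam0 c0 Vstar α α ≤ Q1 γ lam1 c1 Vstar α α := by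
    have e : 0 ≤ γ * lam0 * (Vstar (α+1) (α+1) - Vstar (α+1) 1) :=
      mul_nonneg (mul_nonneg hγ0.le hl0.le) (by linarith)
    simp only [Q0, Q1]
    nlinarith [e]
  have hQ02 : Q0 γ lam0 c0 Vstar α α ≤ Q2 γ lam2 c2 Vstar α α := by
    have e : 0 ≤ γ * (lam0 - lam2) * (Vstar (α+1) (α+1) - Vstar (α+1) 1) :=
      mul_nonneg (mul_nonneg hγ0.le (by linarith)) (by linarith)
    simp only [Q0, Q2]
    nlinarith [e]
  refine ⟨hQ01, hQ02, ?_⟩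
  have := hfix α α hα le_rfl
  rw [this, Tbell, min_eq_left (le_min hQ01 hQ02)]
end

section
/- For every b ≥ 1, the diagonal increment satisfies the recursion B(b) = 1 + γ·λ0·A(b) + γ·(1−λ0)·B(b+1). -/
/-- joint monotonicity on the state space -/
def MonoS (V : ℕ → ℕ → ℝ) : Prop :=
  ∀ ⦃m b m' b' : ℕ⦄, 1 ≤ b → b ≤ b' → b ≤ m → m ≤ m' → b' ≤ m' → V m b ≤ V m' b'

lemma mono_T (γ lam0 lam1 lam2 c0 c1 c2 : ℝ)
    (hγ : 0 ≤ γ) (h0 : 0 ≤ lam0) (h0' : lam0 ≤ 1) (h1 : 0 ≤ lam1) (h1' : lam1 ≤ 1)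
    (h2 : 0 ≤ lam2) (h2' : lam2 ≤ 1)
    {V : ℕ → ℕ → ℝ} (hV : MonoS V) :
    MonoS (Tbell γ lam0 lam1 lam2 c0 c1 c2 V) := by
  intro m b m' b' hb hbb hbm hmm hbm'
  have key : ∀ (l c : ℝ), 0 ≤ l → l ≤ 1 →
      (V (m+1) 1 ≤ V (m'+1) 1 ∨ True) → True := fun _ _ _ _ _ => trivial
  have hmn : (m : ℝ) ≤ (m' : ℝ) := by exact_mod_cast hmm
  have e1 : V (m+1) 1 ≤ V (m'+1) 1 :=
    hV le_rfl le_rfl (by omega) (by omega) (by omega)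
  have e2 : V (m+1) (b+1) ≤ V (m'+1) (b'+1) :=
    hV (by omega) (by omega) (by omega) (by omega) (by omega)
  have e3 : V (b+1) (b+1) ≤ V (b'+1) (b'+1) :=
    hV (by omega) (by omega) (by omega) (by omega) (by omega)
  have e4 : V (b+1) 1 ≤ V (b'+1) 1 :=
    hV le_rfl le_rfl (by omega) (by omega) (by omega)
  have q0 : Q0 γ lam0 c0 V m b ≤ Q0 γ lam0 c0 V m' b' := by
    unfold Q0; have h0'' : (0:ℝ) ≤ 1 - lam0 := by linarith
    nlinarith [mul_le_mul_of_nonneg_left e1 (mul_nonneg hγ h0),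
      mul_le_mul_of_nonneg_left e2 (mul_nonneg hγ h0'')]
  have q1 : Q1 γ lam1 c1 V m b ≤ Q1 γ lam1 c1 V m' b' := by
    unfold Q1; have h1'' : (0:ℝ) ≤ 1 - lam1 := by linarith
    nlinarith [mul_le_mul_of_nonneg_left e3 (mul_nonneg hγ h1),
      mul_le_mul_of_nonneg_left e2 (mul_nonneg hγ h1'')]
  have q2 : Q2 γ lam2 c2 V m b ≤ Q2 γ lam2 c2 V m' b' := by
    unfold Q2; have h2'' : (0:ℝ) ≤ 1 - lam2 := by linarith
    nlinarith [mul_le_mul_of_nonneg_left e4 (mul_nonneg hγ h2),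
      mul_le_mul_of_nonneg_left e2 (mul_nonneg hγ h2'')]
  exact min_le_min q0 (min_le_min q1 q2)

lemma mono_iter (γ lam0 lam1 lam2 c0 c1 c2 : ℝ)
    (hγ : 0 ≤ γ) (h0 : 0 ≤ lam0) (h0' : lam0 ≤ 1) (h1 : 0 ≤ lam1) (h1' : lam1 ≤ 1)
    (h2 : 0 ≤ lam2) (h2' : lam2 ≤ 1) :
    ∀ n, MonoS (iterV γ lam0 lam1 lam2 c0 c1 c2 n) := by
  intro n
  induction n with
  | zero => intro _ _ _ _ _ _ _ _ _; simp [iterV]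
  | succ n ih => exact mono_T γ lam0 lam1 lam2 c0 c1 c2 hγ h0 h0' h1 h1' h2 h2' ih

/-- one-step contraction estimate at a single state -/
lemma T_diff_bound (γ lam0 lam1 lam2 c0 c1 c2 : ℝ)
    (hγ : 0 ≤ γ) (h0 : 0 ≤ lam0) (h0' : lam0 ≤ 1) (h1 : 0 ≤ lam1) (h1' : lam1 ≤ 1)
    (h2 : 0 ≤ lam2) (h2' : lam2 ≤ 1)
    (V W : ℕ → ℕ → ℝ) (m b : ℕ) (K : ℝ)
    (d1 : |V (m+1) 1 - W (m+1) 1| ≤ K)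
    (d2 : |V (m+1) (b+1) - W (m+1) (b+1)| ≤ K)
    (d3 : |V (b+1) (b+1) - W (b+1) (b+1)| ≤ K)
    (d4 : |V (b+1) 1 - W (b+1) 1| ≤ K) :
    |Tbell γ lam0 lam1 lam2 c0 c1 c2 V m b - Tbell γ lam0 lam1 lam2 c0 c1 c2 W m b|
      ≤ γ * K := by
  have core : ∀ (l : ℝ) (p q p' q' : ℝ), 0 ≤ l → l ≤ 1 → |p - p'| ≤ K → |q - q'| ≤ K →
      |γ * (l * p + (1 - l) * q) - γ * (l * p' + (1 - l) * q')| ≤ γ * K := by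
    intro l p q p' q' hl hl' hp hq
    have : γ * (l * p + (1 - l) * q) - γ * (l * p' + (1 - l) * q')
        = γ * (l * (p - p') + (1 - l) * (q - q')) := by ring
    rw [this, abs_mul, abs_of_nonneg hγ]
    have : |l * (p - p') + (1 - l) * (q - q')| ≤ l * K + (1 - l) * K := by
      calc |l * (p - p') + (1 - l) * (q - q')|
          ≤ |l * (p - p')| + |(1 - l) * (q - q')| := abs_add_le _ _
        _ = l * |p - p'| + (1 - l) * |q - q'| := by
            rw [abs_mul, abs_mul, abs_of_nonneg hl, abs_of_nonneg (show (0:ℝ) ≤ 1 - l by linarith)]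
        _ ≤ l * K + (1 - l) * K := by
            have hK : 0 ≤ K := le_trans (abs_nonneg _) hp
            exact add_le_add (mul_le_mul_of_nonneg_left hp hl)
              (mul_le_mul_of_nonneg_left hq (by linarith))
    calc γ * |l * (p - p') + (1 - l) * (q - q')| ≤ γ * (l * K + (1 - l) * K) :=
          mul_le_mul_of_nonneg_left this hγ
      _ = γ * K := by ring
  have b0 : |Q0 γ lam0 c0 V m b - Q0 γ lam0 c0 W m b| ≤ γ * K := by
    unfold Q0
    have := core lam0 (V (m+1) 1) (V (m+1) (b+1)) (W (m+1) 1) (W (m+1) (b+1)) h0 h0' d1 d2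
    calc |(↑m + c0 + γ * (lam0 * V (m+1) 1 + (1 - lam0) * V (m+1) (b+1))) -
          (↑m + c0 + γ * (lam0 * W (m+1) 1 + (1 - lam0) * W (m+1) (b+1)))|
        = |γ * (lam0 * V (m+1) 1 + (1 - lam0) * V (m+1) (b+1)) -
            γ * (lam0 * W (m+1) 1 + (1 - lam0) * W (m+1) (b+1))| := by ring_nf
      _ ≤ γ * K := this
  have b1 : |Q1 γ lam1 c1 V m b - Q1 γ lam1 c1 W m b| ≤ γ * K := by
    unfold Q1
    have := core lam1 (V (b+1) (b+1)) (V (m+1) (b+1)) (W (b+1) (b+1)) (W (m+1) (b+1)) h1 h1' d3 d2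
    calc |(↑m + c1 + γ * (lam1 * V (b+1) (b+1) + (1 - lam1) * V (m+1) (b+1))) -
          (↑m + c1 + γ * (lam1 * W (b+1) (b+1) + (1 - lam1) * W (m+1) (b+1)))|
        = |γ * (lam1 * V (b+1) (b+1) + (1 - lam1) * V (m+1) (b+1)) -
            γ * (lam1 * W (b+1) (b+1) + (1 - lam1) * W (m+1) (b+1))| := by ring_nf
      _ ≤ γ * K := this
  have b2 : |Q2 γ lam2 c2 V m b - Q2 γ lam2 c2 W m b| ≤ γ * K := by
    unfold Q2
    have := core lam2 (V (b+1) 1) (V (m+1) (b+1)) (W (b+1) 1) (W (m+1) (b+1)) h2 h2' d4 d2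
    calc |(↑m + c2 + γ * (lam2 * V (b+1) 1 + (1 - lam2) * V (m+1) (b+1))) -
          (↑m + c2 + γ * (lam2 * W (b+1) 1 + (1 - lam2) * W (m+1) (b+1)))|
        = |γ * (lam2 * V (b+1) 1 + (1 - lam2) * V (m+1) (b+1)) -
            γ * (lam2 * W (b+1) 1 + (1 - lam2) * W (m+1) (b+1))| := by ring_nf
      _ ≤ γ * K := this
  unfold Tbell
  refine (abs_min_sub_min_le_max _ _ _ _).trans (max_le b0 ?_)
  exact (abs_min_sub_min_le_max _ _ _ _).trans (max_le b1 b2)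

/-- The diagonal increment `B(b) = V★(b+1,b+1) − V★(b,b)` satisfies the
recursion `B(b) = 1 + γλ0·A(b) + γ(1−λ0)·B(b+1)`, where `A(b) = V★(b+2,1) − V★(b+1,1)`. -/
theorem diagonal_increment_recursion
    (γ lam0 lam1 lam2 c0 c1 c2 ρ : ℝ)
    (hγ0 : 0 < γ) (hγ1 : γ < 1)
    (hl0 : 0 < lam0) (hl0' : lam0 < 1)
    (hl1 : 0 < lam1) (hl1' : lam1 < 1)
    (hl2 : 0 < lam2) (hl2' : lam2 < 1)
    (hc0 : 0 ≤ c0) (hc1 : 0 ≤ c1) (hc2 : 0 ≤ c2)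
    (hord1 : lam2 ≤ lam0) (hord2 : lam0 ≤ lam1)
    (hord3 : c0 ≤ c1) (hord4 : c1 ≤ c2)
    (hρ1 : 1 < ρ) (hρ2 : ρ < 1 / γ)
    (Vstar : ℕ → ℕ → ℝ)
    (hnorm : ∃ C : ℝ, ∀ m b : ℕ, 1 ≤ b → b ≤ m → |Vstar m b| ≤ C * ρ ^ m)
    (hfix : ∀ m b : ℕ, 1 ≤ b → b ≤ m →
      Vstar m b = Tbell γ lam0 lam1 lam2 c0 c1 c2 Vstar m b) :
    ∀ b : ℕ, 1 ≤ b →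
      Vstar (b + 1) (b + 1) - Vstar b b =
        1 + γ * lam0 * (Vstar (b + 2) 1 - Vstar (b + 1) 1) +
          γ * (1 - lam0) * (Vstar (b + 2) (b + 2) - Vstar (b + 1) (b + 1)) := by
  obtain ⟨C, hC⟩ := hnorm
  set C' : ℝ := max C 0 with hC'def
  have hC'0 : 0 ≤ C' := le_max_right _ _
  have hρ0 : (0:ℝ) < ρ := lt_trans one_pos hρ1
  have hγρ : γ * ρ < 1 := by
    have := (lt_div_iff₀ hγ0).mp hρ2; linarith [this]
  have hγρ0 : 0 ≤ γ * ρ := mul_nonneg hγ0.le hρ0.le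
  -- error bound for value iteration
  have herr : ∀ n, ∀ m b : ℕ, 1 ≤ b → b ≤ m →
      |Vstar m b - iterV γ lam0 lam1 lam2 c0 c1 c2 n m b| ≤ (γ * ρ) ^ n * C' * ρ ^ m := by
    intro n
    induction n with
    | zero =>
      intro m b hb hbm
      simp only [iterV, pow_zero, one_mul, sub_zero]
      exact (hC m b hb hbm).trans (by
        have : C ≤ C' := le_max_left _ _
        exact mul_le_mul_of_nonneg_right this (pow_nonneg hρ0.le m))
    | succ n ih =>
      intro m b hb hbm
      rw [hfix m b hb hbm]
      show |Tbell γ lam0 lam1 lam2 c0 c1 c2 Vstar m b -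
        Tbell γ lam0 lam1 lam2 c0 c1 c2 (iterV γ lam0 lam1 lam2 c0 c1 c2 n) m b| ≤ _
      have K := (γ * ρ) ^ n * C' * ρ ^ (m + 1)
      have hmono : ∀ k : ℕ, k ≤ m + 1 → ρ ^ k ≤ ρ ^ (m+1) :=
        fun k hk => pow_le_pow_right₀ hρ1.le hk
      have hKmono : ∀ k : ℕ, k ≤ m + 1 → (γ * ρ) ^ n * C' * ρ ^ k ≤ (γ * ρ) ^ n * C' * ρ ^ (m+1) :=
        fun k hk => mul_le_mul_of_nonneg_left (hmono k hk)
          (mul_nonneg (pow_nonneg hγρ0 n) hC'0)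
      have d1 := (ih (m+1) 1 le_rfl (by omega))
      have d2 := (ih (m+1) (b+1) (by omega) (by omega))
      have d3 := (ih (b+1) (b+1) (by omega) le_rfl)
      have d4 := (ih (b+1) 1 le_rfl (by omega))
      have d3' := d3.trans (hKmono (b+1) (by omega))
      have d4' := d4.trans (hKmono (b+1) (by omega))
      have := T_diff_bound γ lam0 lam1 lam2 c0 c1 c2 hγ0.le hl0.le hl0'.le hl1.le hl1'.le
        hl2.le hl2'.le Vstar (iterV γ lam0 lam1 lam2 c0 c1 c2 n) m b
        ((γ * ρ) ^ n * C' * ρ ^ (m+1)) d1 d2 d3' d4'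
      refine this.trans (le_of_eq ?_)
      rw [pow_succ', pow_succ]; ring
  -- monotonicity of Vstar on the state space
  have hmonoV : ∀ m b m' b' : ℕ, 1 ≤ b → b ≤ b' → b ≤ m → m ≤ m' → b' ≤ m' →
      Vstar m b ≤ Vstar m' b' := by
    intro m b m' b' hb hbb hbm hmm hbm'
    have hlim : Filter.Tendsto (fun n : ℕ => Vstar m' b' + 2 * ((γ * ρ) ^ n * C' * ρ ^ m'))
        Filter.atTop (nhds (Vstar m' b' + 2 * (0 * C' * ρ ^ m'))) := by
      exact Filter.Tendsto.const_add _ ((((tendsto_pow_atTop_nhds_zero_of_lt_one hγρ0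
        hγρ).mul_const C').mul_const (ρ ^ m')).const_mul 2)
    have hlim' : Filter.Tendsto (fun n : ℕ => Vstar m' b' + 2 * ((γ * ρ) ^ n * C' * ρ ^ m'))
        Filter.atTop (nhds (Vstar m' b')) := by simpa using hlim
    refine ge_of_tendsto' hlim' (fun n => ?_)
    have e1 := herr n m b hb hbm
    have e2 := herr n m' b' (by omega) hbm'
    have hmono := mono_iter γ lam0 lam1 lam2 c0 c1 c2 hγ0.le hl0.le hl0'.le hl1.le hl1'.le
      hl2.le hl2'.le n hb hbb hbm hmm hbm'
    have hw : (γ * ρ) ^ n * C' * ρ ^ m ≤ (γ * ρ) ^ n * C' * ρ ^ m' :=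
      mul_le_mul_of_nonneg_left (pow_le_pow_right₀ hρ1.le hmm)
        (mul_nonneg (pow_nonneg hγρ0 n) hC'0)
    have a1 := abs_le.mp e1
    have a2 := abs_le.mp e2
    linarith [a1.1, a1.2, a2.1, a2.2]
  -- the min at diagonal states is Q0
  have hdiag : ∀ b : ℕ, 1 ≤ b → Vstar b b = Q0 γ lam0 c0 Vstar b b := by
    intro b hb
    have hm : Vstar (b+1) 1 ≤ Vstar (b+1) (b+1) :=
      hmonoV (b+1) 1 (b+1) (b+1) le_rfl (by omega) (by omega) le_rfl le_rfl
    have q01 : Q0 γ lam0 c0 Vstar b b ≤ Q1 γ lam1 c1 Vstar b b := by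
      unfold Q0 Q1
      nlinarith [mul_le_mul_of_nonneg_left hm (mul_nonneg hγ0.le hl0.le)]
    have q02 : Q0 γ lam0 c0 Vstar b b ≤ Q2 γ lam2 c2 Vstar b b := by
      unfold Q0 Q2
      nlinarith [mul_le_mul_of_nonneg_left hm (mul_nonneg hγ0.le (by linarith : (0:ℝ) ≤ lam0 - lam2))]
    rw [hfix b b hb le_rfl]
    unfold Tbell
    exact min_eq_left (le_min q01 q02)
  intro b hb
  have h1 := hdiag b hb
  have h2 := hdiag (b+1) (by omega)
  simp only [Q0, show b+1+1 = b+2 from rfl] at h1 h2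
  push_cast at h1 h2 ⊢
  linear_combination h2 - h1
end

section
/- For every b ≥ 1, B(b) − A(b) ≤ (1 − (1−γ)·A(b))/(1 − γ + γ·λ0), and moreover B(b) − A(b) < 1/(γ·λ0). -/
/-- Value iteration sequence starting from `0`. -/
noncomputable def Vseq (γ lam0 lam1 lam2 c0 c1 c2 : ℝ) : ℕ → ℕ → ℕ → ℝ
  | 0 => fun _ _ => 0
  | n + 1 => Tbell γ lam0 lam1 lam2 c0 c1 c2 (Vseq γ lam0 lam1 lam2 c0 c1 c2 n)

lemma min3_add_le_s9 (a0 a1 a2 d0 d1 d2 b0 b1 b2 : ℝ)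
    (h0 : a0 + d0 ≤ 2 * b0) (h1 : a1 + d1 ≤ 2 * b1) (h2 : a2 + d2 ≤ 2 * b2) :
    min a0 (min a1 a2) + min d0 (min d1 d2) ≤ 2 * min b0 (min b1 b2) := by
  rcases min_cases b0 (min b1 b2) with ⟨he, _⟩ | ⟨he, _⟩
  · rw [he]; exact le_trans (add_le_add (min_le_left _ _) (min_le_left _ _)) h0
  · rcases min_cases b1 b2 with ⟨he2, _⟩ | ⟨he2, _⟩ <;> rw [he, he2]
    · exact le_trans (add_le_add ((min_le_right _ _).trans (min_le_left _ _))
        ((min_le_right _ _).trans (min_le_left _ _))) h1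
    · exact le_trans (add_le_add ((min_le_right _ _).trans (min_le_right _ _))
        ((min_le_right _ _).trans (min_le_right _ _))) h2

lemma abs_min3_sub_min3_s9 (a1 a2 a3 b1 b2 b3 E : ℝ)
    (h1 : |a1 - b1| ≤ E) (h2 : |a2 - b2| ≤ E) (h3 : |a3 - b3| ≤ E) :
    |min a1 (min a2 a3) - min b1 (min b2 b3)| ≤ E :=
  (abs_min_sub_min_le_max _ _ _ _).trans
    (max_le h1 ((abs_min_sub_min_le_max _ _ _ _).trans (max_le h2 h3)))

lemma abs_mix (γ lam d1 d2 E : ℝ) (hγ : 0 ≤ γ) (h0 : 0 ≤ lam) (h1 : lam ≤ 1)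
    (hE1 : |d1| ≤ E) (hE2 : |d2| ≤ E) :
    |γ * (lam * d1 + (1 - lam) * d2)| ≤ γ * E := by
  have a1 := abs_le.mp hE1
  have a2 := abs_le.mp hE2
  rw [abs_le]
  constructor
  · nlinarith [mul_nonneg (mul_nonneg hγ h0) (by linarith : 0 ≤ d1 + E),
      mul_nonneg (mul_nonneg hγ (by linarith : 0 ≤ 1 - lam)) (by linarith : 0 ≤ d2 + E)]
  · nlinarith [mul_nonneg (mul_nonneg hγ h0) (by linarith : 0 ≤ E - d1),
      mul_nonneg (mul_nonneg hγ (by linarith : 0 ≤ 1 - lam)) (by linarith : 0 ≤ E - d2)]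

lemma nonpos_of_le_geom (x K q : ℝ) (hq0 : 0 ≤ q) (hq1 : q < 1)
    (h : ∀ n : ℕ, x ≤ K * q ^ n) : x ≤ 0 := by
  have h2 : Filter.Tendsto (fun n : ℕ => K * q ^ n) Filter.atTop (nhds 0) := by
    simpa using (tendsto_pow_atTop_nhds_zero_of_lt_one hq0 hq1).const_mul K
  exact ge_of_tendsto' h2 h

set_option maxHeartbeats 1000000 in
/-- `Tbell` preserves monotonicity and the two concavity properties. -/
lemma Tbell_preserves (γ lam0 lam1 lam2 c0 c1 c2 : ℝ)
    (hγ0 : 0 ≤ γ) (hl0 : 0 ≤ lam0) (hl0' : lam0 ≤ 1)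
    (hl1 : 0 ≤ lam1) (hl1' : lam1 ≤ 1) (hl2 : 0 ≤ lam2) (hl2' : lam2 ≤ 1)
    (V : ℕ → ℕ → ℝ)
    (hm : ∀ b b' m m' : ℕ, 1 ≤ b → b ≤ b' → b' ≤ m → m ≤ m' → V m b ≤ V m' b')
    (hcm : ∀ m b : ℕ, 1 ≤ b → b ≤ m → V (m + 2) b + V m b ≤ 2 * V (m + 1) b)
    (hcd : ∀ k : ℕ, 1 ≤ k → V (k + 2) (k + 2) + V k k ≤ 2 * V (k + 1) (k + 1)) :
    (∀ b b' m m' : ℕ, 1 ≤ b → b ≤ b' → b' ≤ m → m ≤ m' →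
        Tbell γ lam0 lam1 lam2 c0 c1 c2 V m b ≤ Tbell γ lam0 lam1 lam2 c0 c1 c2 V m' b') ∧
    (∀ m b : ℕ, 1 ≤ b → b ≤ m →
        Tbell γ lam0 lam1 lam2 c0 c1 c2 V (m + 2) b + Tbell γ lam0 lam1 lam2 c0 c1 c2 V m b ≤
          2 * Tbell γ lam0 lam1 lam2 c0 c1 c2 V (m + 1) b) ∧
    (∀ k : ℕ, 1 ≤ k →
        Tbell γ lam0 lam1 lam2 c0 c1 c2 V (k + 2) (k + 2) +
            Tbell γ lam0 lam1 lam2 c0 c1 c2 V k k ≤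
          2 * Tbell γ lam0 lam1 lam2 c0 c1 c2 V (k + 1) (k + 1)) := by
  have hg0 : (0:ℝ) ≤ γ * lam0 := mul_nonneg hγ0 hl0
  have hg0' : (0:ℝ) ≤ γ * (1 - lam0) := mul_nonneg hγ0 (by linarith)
  have hg1 : (0:ℝ) ≤ γ * lam1 := mul_nonneg hγ0 hl1
  have hg1' : (0:ℝ) ≤ γ * (1 - lam1) := mul_nonneg hγ0 (by linarith)
  have hg2 : (0:ℝ) ≤ γ * lam2 := mul_nonneg hγ0 hl2
  have hg2' : (0:ℝ) ≤ γ * (1 - lam2) := mul_nonneg hγ0 (by linarith)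
  refine ⟨?_, ?_, ?_⟩
  · -- monotonicity
    intro b b' m m' hb hbb hbm hmm
    have hc : (m : ℝ) ≤ (m' : ℝ) := Nat.cast_le.mpr hmm
    have h1 : V (m + 1) 1 ≤ V (m' + 1) 1 :=
      hm 1 1 (m + 1) (m' + 1) le_rfl le_rfl (by omega) (by omega)
    have h2 : V (m + 1) (b + 1) ≤ V (m' + 1) (b' + 1) :=
      hm (b + 1) (b' + 1) (m + 1) (m' + 1) (by omega) (by omega) (by omega) (by omega)
    have h3 : V (b + 1) (b + 1) ≤ V (b' + 1) (b' + 1) :=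
      le_trans (hm (b + 1) (b + 1) (b + 1) (b' + 1) (by omega) le_rfl le_rfl (by omega))
        (hm (b + 1) (b' + 1) (b' + 1) (b' + 1) (by omega) (by omega) le_rfl le_rfl)
    have h4 : V (b + 1) 1 ≤ V (b' + 1) 1 :=
      hm 1 1 (b + 1) (b' + 1) le_rfl le_rfl (by omega) (by omega)
    simp only [Tbell]
    refine le_min ((min_le_left _ _).trans ?_)
      (le_min (((min_le_right _ _).trans (min_le_left _ _)).trans ?_)
        (((min_le_right _ _).trans (min_le_right _ _)).trans ?_))
    · simp only [Q0]
      linarith [mul_le_mul_of_nonneg_left h1 hg0, mul_le_mul_of_nonneg_left h2 hg0']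
    · simp only [Q1]
      linarith [mul_le_mul_of_nonneg_left h3 hg1, mul_le_mul_of_nonneg_left h2 hg1']
    · simp only [Q2]
      linarith [mul_le_mul_of_nonneg_left h4 hg2, mul_le_mul_of_nonneg_left h2 hg2']
  · -- concavity in m
    intro m b hb hbm
    have e1 : V (m + 2 + 1) 1 + V (m + 1) 1 ≤ 2 * V (m + 1 + 1) 1 :=
      hcm (m + 1) 1 le_rfl (by omega)
    have e2 : V (m + 2 + 1) (b + 1) + V (m + 1) (b + 1) ≤ 2 * V (m + 1 + 1) (b + 1) :=
      hcm (m + 1) (b + 1) (by omega) (by omega)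
    simp only [Tbell]
    apply min3_add_le_s9
    · simp only [Q0]
      push_cast
      linarith [mul_le_mul_of_nonneg_left e1 hg0, mul_le_mul_of_nonneg_left e2 hg0']
    · simp only [Q1]
      push_cast
      linarith [mul_le_mul_of_nonneg_left e2 hg1']
    · simp only [Q2]
      push_cast
      linarith [mul_le_mul_of_nonneg_left e1 hg2, mul_le_mul_of_nonneg_left e2 hg2']
  · -- concavity along the diagonal
    intro k hk
    have e1 : V (k + 2 + 1) 1 + V (k + 1) 1 ≤ 2 * V (k + 1 + 1) 1 :=
      hcm (k + 1) 1 le_rfl (by omega)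
    have dd : V (k + 2 + 1) (k + 2 + 1) + V (k + 1) (k + 1) ≤ 2 * V (k + 1 + 1) (k + 1 + 1) :=
      hcd (k + 1) (by omega)
    simp only [Tbell]
    apply min3_add_le_s9
    · simp only [Q0]
      push_cast
      linarith [mul_le_mul_of_nonneg_left e1 hg0, mul_le_mul_of_nonneg_left dd hg0']
    · simp only [Q1]
      push_cast
      linarith [mul_le_mul_of_nonneg_left dd hg1, mul_le_mul_of_nonneg_left dd hg1']
    · simp only [Q2]
      push_cast
      linarith [mul_le_mul_of_nonneg_left e1 hg2, mul_le_mul_of_nonneg_left dd hg2']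

set_option maxHeartbeats 1000000 in
/-- With `A(b) = V★(b+2,1) − V★(b+1,1)` and
`B(b) = V★(b+1,b+1) − V★(b,b)`, for every `b ≥ 1`,
`B(b) − A(b) ≤ (1 − (1−γ)A(b))/(1 − γ + γλ0)` and `B(b) − A(b) < 1/(γλ0)`. -/
theorem diagonal_gap_bound
    (γ lam0 lam1 lam2 c0 c1 c2 ρ : ℝ)
    (hγ0 : 0 < γ) (hγ1 : γ < 1)
    (hl0 : 0 < lam0) (hl0' : lam0 < 1)
    (hl1 : 0 < lam1) (hl1' : lam1 < 1)
    (hl2 : 0 < lam2) (hl2' : lam2 < 1)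
    (hc0 : 0 ≤ c0) (hc1 : 0 ≤ c1) (hc2 : 0 ≤ c2)
    (hord1 : lam2 ≤ lam0) (hord2 : lam0 ≤ lam1)
    (hord3 : c0 ≤ c1) (hord4 : c1 ≤ c2)
    (hρ1 : 1 < ρ) (hρ2 : ρ < 1 / γ)
    (Vstar : ℕ → ℕ → ℝ)
    (hnorm : ∃ C : ℝ, ∀ m b : ℕ, 1 ≤ b → b ≤ m → |Vstar m b| ≤ C * ρ ^ m)
    (hfix : ∀ m b : ℕ, 1 ≤ b → b ≤ m →
      Vstar m b = Tbell γ lam0 lam1 lam2 c0 c1 c2 Vstar m b) :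
    ∀ b : ℕ, 1 ≤ b →
      (Vstar (b + 1) (b + 1) - Vstar b b) - (Vstar (b + 2) 1 - Vstar (b + 1) 1) ≤
        (1 - (1 - γ) * (Vstar (b + 2) 1 - Vstar (b + 1) 1)) / (1 - γ + γ * lam0) ∧
      (Vstar (b + 1) (b + 1) - Vstar b b) - (Vstar (b + 2) 1 - Vstar (b + 1) 1) <
        1 / (γ * lam0) := by
  obtain ⟨C, hC⟩ := hnorm
  have hρ0 : (0:ℝ) < ρ := lt_trans one_pos hρ1
  have hγρ : γ * ρ < 1 := by
    rw [lt_div_iff₀ hγ0] at hρ2; nlinarith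
  have hγρ0 : (0:ℝ) ≤ γ * ρ := by positivity
  have hC0 : (0:ℝ) ≤ C := by
    have h1 := hC 1 1 le_rfl le_rfl
    have h2 := abs_nonneg (Vstar 1 1)
    nlinarith
  set W : ℕ → ℕ → ℕ → ℝ := Vseq γ lam0 lam1 lam2 c0 c1 c2 with hWdef
  have hW0 : W 0 = fun _ _ => (0:ℝ) := rfl
  have hWs : ∀ n, W (n + 1) = Tbell γ lam0 lam1 lam2 c0 c1 c2 (W n) := fun n => rfl
  -- structural properties of the value iteration sequence
  have hgood : ∀ n : ℕ,
      (∀ b b' m m' : ℕ, 1 ≤ b → b ≤ b' → b' ≤ m → m ≤ m' → W n m b ≤ W n m' b') ∧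
      (∀ m b : ℕ, 1 ≤ b → b ≤ m → W n (m + 2) b + W n m b ≤ 2 * W n (m + 1) b) ∧
      (∀ k : ℕ, 1 ≤ k → W n (k + 2) (k + 2) + W n k k ≤ 2 * W n (k + 1) (k + 1)) := by
    intro n
    induction n with
    | zero =>
      refine ⟨?_, ?_, ?_⟩ <;> intros <;> simp [hW0]
    | succ n ih =>
      rw [hWs n]
      exact Tbell_preserves γ lam0 lam1 lam2 c0 c1 c2 hγ0.le hl0.le hl0'.le hl1.le hl1'.le
        hl2.le hl2'.le (W n) ih.1 ih.2.1 ih.2.2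
  -- approximation of Vstar by the iteration
  have happrox : ∀ n m b : ℕ, 1 ≤ b → b ≤ m →
      |Vstar m b - W n m b| ≤ C * (γ * ρ) ^ n * ρ ^ m := by
    intro n
    induction n with
    | zero =>
      intro m b hb hbm
      simpa [hW0] using hC m b hb hbm
    | succ n ih =>
      intro m b hb hbm
      have hE0 : (0:ℝ) ≤ C * (γ * ρ) ^ n := by positivity
      have d1 : |Vstar (m + 1) 1 - W n (m + 1) 1| ≤ C * (γ * ρ) ^ n * ρ ^ (m + 1) :=
        ih (m + 1) 1 le_rfl (by omega)
      have d2 : |Vstar (m + 1) (b + 1) - W n (m + 1) (b + 1)| ≤ C * (γ * ρ) ^ n * ρ ^ (m + 1) :=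
        ih (m + 1) (b + 1) (by omega) (by omega)
      have hpow : ρ ^ (b + 1) ≤ ρ ^ (m + 1) := pow_le_pow_right₀ hρ1.le (by omega)
      have d3 : |Vstar (b + 1) (b + 1) - W n (b + 1) (b + 1)| ≤ C * (γ * ρ) ^ n * ρ ^ (m + 1) :=
        (ih (b + 1) (b + 1) (by omega) le_rfl).trans (mul_le_mul_of_nonneg_left hpow hE0)
      have d4 : |Vstar (b + 1) 1 - W n (b + 1) 1| ≤ C * (γ * ρ) ^ n * ρ ^ (m + 1) :=
        (ih (b + 1) 1 le_rfl (by omega)).trans (mul_le_mul_of_nonneg_left hpow hE0)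
      rw [hfix m b hb hbm, hWs n]
      have hq0 : |Q0 γ lam0 c0 Vstar m b - Q0 γ lam0 c0 (W n) m b| ≤
          γ * (C * (γ * ρ) ^ n * ρ ^ (m + 1)) := by
        have e : Q0 γ lam0 c0 Vstar m b - Q0 γ lam0 c0 (W n) m b =
            γ * (lam0 * (Vstar (m + 1) 1 - W n (m + 1) 1) +
              (1 - lam0) * (Vstar (m + 1) (b + 1) - W n (m + 1) (b + 1))) := by
          simp only [Q0]; ring
        rw [e]
        exact abs_mix γ lam0 _ _ _ hγ0.le hl0.le hl0'.le d1 d2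
      have hq1 : |Q1 γ lam1 c1 Vstar m b - Q1 γ lam1 c1 (W n) m b| ≤
          γ * (C * (γ * ρ) ^ n * ρ ^ (m + 1)) := by
        have e : Q1 γ lam1 c1 Vstar m b - Q1 γ lam1 c1 (W n) m b =
            γ * (lam1 * (Vstar (b + 1) (b + 1) - W n (b + 1) (b + 1)) +
              (1 - lam1) * (Vstar (m + 1) (b + 1) - W n (m + 1) (b + 1))) := by
          simp only [Q1]; ring
        rw [e]
        exact abs_mix γ lam1 _ _ _ hγ0.le hl1.le hl1'.le d3 d2
      have hq2 : |Q2 γ lam2 c2 Vstar m b - Q2 γ lam2 c2 (W n) m b| ≤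
          γ * (C * (γ * ρ) ^ n * ρ ^ (m + 1)) := by
        have e : Q2 γ lam2 c2 Vstar m b - Q2 γ lam2 c2 (W n) m b =
            γ * (lam2 * (Vstar (b + 1) 1 - W n (b + 1) 1) +
              (1 - lam2) * (Vstar (m + 1) (b + 1) - W n (m + 1) (b + 1))) := by
          simp only [Q2]; ring
        rw [e]
        exact abs_mix γ lam2 _ _ _ hγ0.le hl2.le hl2'.le d4 d2
      have hmain := abs_min3_sub_min3_s9 _ _ _ _ _ _ _ hq0 hq1 hq2
      have heq : γ * (C * (γ * ρ) ^ n * ρ ^ (m + 1)) = C * (γ * ρ) ^ (n + 1) * ρ ^ m := by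
        ring
      simpa only [Tbell, heq] using hmain
  -- monotonicity of Vstar
  have hmono : ∀ b b' m m' : ℕ, 1 ≤ b → b ≤ b' → b' ≤ m → m ≤ m' →
      Vstar m b ≤ Vstar m' b' := by
    intro b1 b2 m1 m2 h1 h2 h3 h4
    have key : Vstar m1 b1 - Vstar m2 b2 ≤ 0 := by
      apply nonpos_of_le_geom _ (C * (ρ ^ m1 + ρ ^ m2)) _ hγρ0 hγρ
      intro n
      have a1 := abs_le.mp (happrox n m1 b1 h1 (le_trans h2 h3))
      have a2 := abs_le.mp (happrox n m2 b2 (le_trans h1 h2) (le_trans h3 h4))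
      have a3 := (hgood n).1 b1 b2 m1 m2 h1 h2 h3 h4
      linarith [a1.1, a1.2, a2.1, a2.2]
    linarith
  -- diagonal concavity of Vstar
  have hconcd : ∀ k : ℕ, 1 ≤ k →
      Vstar (k + 2) (k + 2) + Vstar k k ≤ 2 * Vstar (k + 1) (k + 1) := by
    intro k hk
    have key : Vstar (k + 2) (k + 2) + Vstar k k - 2 * Vstar (k + 1) (k + 1) ≤ 0 := by
      apply nonpos_of_le_geom _ (C * (ρ ^ (k + 2) + ρ ^ k + 2 * ρ ^ (k + 1))) _ hγρ0 hγρ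
      intro n
      have a1 := abs_le.mp (happrox n (k + 2) (k + 2) (by omega) le_rfl)
      have a2 := abs_le.mp (happrox n k k hk le_rfl)
      have a3 := abs_le.mp (happrox n (k + 1) (k + 1) (by omega) le_rfl)
      have a4 := (hgood n).2.2 k hk
      linarith [a1.1, a1.2, a2.1, a2.2, a3.1, a3.2]
    linarith
  -- final algebra
  intro b hb
  have hv1d1 : Vstar (b + 1) 1 ≤ Vstar (b + 1) (b + 1) :=
    hmono 1 (b + 1) (b + 1) (b + 1) le_rfl (by omega) le_rfl le_rfl
  have hA0 : Vstar (b + 1) 1 ≤ Vstar (b + 2) 1 :=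
    hmono 1 1 (b + 1) (b + 2) le_rfl le_rfl (by omega) (by omega)
  have hF2 : Vstar (b + 1) (b + 1) ≤ (b : ℝ) + 1 + c0 +
      γ * (lam0 * Vstar (b + 2) 1 + (1 - lam0) * Vstar (b + 2) (b + 2)) := by
    rw [hfix (b + 1) (b + 1) (by omega) le_rfl]
    refine (min_le_left _ _).trans ?_
    show ((b + 1 : ℕ) : ℝ) + c0 +
        γ * (lam0 * Vstar (b + 2) 1 + (1 - lam0) * Vstar (b + 2) (b + 2)) ≤ _
    push_cast
    linarith
  have hF1 : (b : ℝ) + c0 + γ * (lam0 * Vstar (b + 1) 1 + (1 - lam0) * Vstar (b + 1) (b + 1)) ≤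
      Vstar b b := by
    rw [hfix b b hb le_rfl]
    refine le_min ?_ (le_min ?_ ?_)
    · simp only [Q0]; exact le_rfl
    · simp only [Q1]
      linarith [mul_nonneg (mul_nonneg hγ0.le hl0.le) (sub_nonneg.mpr hv1d1)]
    · simp only [Q2]
      linarith [mul_nonneg (mul_nonneg hγ0.le (sub_nonneg.mpr hord1)) (sub_nonneg.mpr hv1d1)]
  have hcd := hconcd b hb
  have hprod : γ * (1 - lam0) * (Vstar (b + 2) (b + 2) - Vstar (b + 1) (b + 1)) ≤
      γ * (1 - lam0) * (Vstar (b + 1) (b + 1) - Vstar b b) :=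
    mul_le_mul_of_nonneg_left (by linarith) (mul_nonneg hγ0.le (by linarith))
  have hkey : (1 - γ + γ * lam0) * (Vstar (b + 1) (b + 1) - Vstar b b) ≤
      1 + γ * lam0 * (Vstar (b + 2) 1 - Vstar (b + 1) 1) := by
    linarith [hF1, hF2, hprod]
  have hden : (0:ℝ) < 1 - γ + γ * lam0 := by linarith [mul_pos hγ0 hl0]
  have hfirst : (Vstar (b + 1) (b + 1) - Vstar b b) - (Vstar (b + 2) 1 - Vstar (b + 1) 1) ≤
      (1 - (1 - γ) * (Vstar (b + 2) 1 - Vstar (b + 1) 1)) / (1 - γ + γ * lam0) := by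
    rw [le_div_iff₀ hden]
    linarith [hkey]
  refine ⟨hfirst, ?_⟩
  have h2 : (1 - (1 - γ) * (Vstar (b + 2) 1 - Vstar (b + 1) 1)) / (1 - γ + γ * lam0) ≤
      1 / (1 - γ + γ * lam0) := by
    apply (div_le_div_iff_of_pos_right hden).mpr
    linarith [mul_nonneg (by linarith : (0:ℝ) ≤ 1 - γ) (by linarith : (0:ℝ) ≤ Vstar (b + 2) 1 - Vstar (b + 1) 1)]
  have h3 : 1 / (1 - γ + γ * lam0) < 1 / (γ * lam0) := by
    apply one_div_lt_one_div_of_lt (by positivity)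
    linarith [mul_pos hγ0 hl0]
  linarith
end

section
/- For every b ≥ 1 and every m ≥ b+1, the vertical increment satisfies C(m,b) ≤ B(b+1). -/
set_option maxHeartbeats 2000000


/-- Generic weighted-sup contraction lemma: if a family of violations `f` (restricted to a
domain `P`) is bounded above by `K · ρ^m` and each violation is bounded by a subconvex
combination (total mass ≤ γ) of violations at first index `m+1`, then with `γρ < 1` all
violations are nonpositive. -/
lemma contract_aux (γ ρ : ℝ) (hγ : 0 ≤ γ) (hρ : 1 ≤ ρ) (hγρ : γ * ρ < 1)
    (P : ℕ → ℕ → Prop) (f : ℕ → ℕ → ℝ) (K : ℝ)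
    (hbdd : ∀ m b, P m b → f m b ≤ K * ρ ^ m)
    (hstep : ∀ m b, P m b → ∃ c1 c2 b1 b2, 0 ≤ c1 ∧ 0 ≤ c2 ∧ c1 + c2 ≤ γ ∧
      P (m+1) b1 ∧ P (m+1) b2 ∧ f m b ≤ c1 * f (m+1) b1 + c2 * f (m+1) b2) :
    ∀ m b, P m b → f m b ≤ 0 := by
  have hρ0 : (0:ℝ) < ρ := by linarith
  set S : Set ℝ := insert (0:ℝ) {x | ∃ m b, P m b ∧ x = f m b / ρ ^ m} with hS
  have hne : S.Nonempty := ⟨0, Set.mem_insert _ _⟩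
  have hub : ∀ x ∈ S, x ≤ max K 0 := by
    rintro x hx
    rcases hx with rfl | ⟨m, b, hP, rfl⟩
    · exact le_max_right _ _
    · have h1 : f m b / ρ ^ m ≤ K := by
        rw [div_le_iff₀ (pow_pos hρ0 m)]
        exact hbdd m b hP
      exact le_trans h1 (le_max_left _ _)
  have hbddS : BddAbove S := ⟨max K 0, fun x hx => hub x hx⟩
  set D := sSup S with hD
  have hD0 : 0 ≤ D := le_csSup hbddS (Set.mem_insert _ _)
  have hmem : ∀ m b, P m b → f m b ≤ D * ρ ^ m := by
    intro m b hP
    have hx : f m b / ρ ^ m ∈ S := Set.mem_insert_iff.2 (Or.inr ⟨m, b, hP, rfl⟩)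
    have := le_csSup hbddS hx
    rw [div_le_iff₀ (pow_pos hρ0 m)] at this
    linarith [this]
  have key : ∀ x ∈ S, x ≤ (γ * ρ) * D := by
    rintro x hx
    rcases hx with rfl | ⟨m, b, hP, rfl⟩
    · positivity
    · obtain ⟨c1, c2, b1, b2, hc1, hc2, hsum, hP1, hP2, hle⟩ := hstep m b hP
      have h1 : f (m+1) b1 ≤ D * ρ ^ (m+1) := hmem _ _ hP1
      have h2 : f (m+1) b2 ≤ D * ρ ^ (m+1) := hmem _ _ hP2
      have hDr : 0 ≤ D * ρ ^ (m+1) := mul_nonneg hD0 (pow_nonneg hρ0.le _)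
      have e1 : c1 * f (m+1) b1 ≤ c1 * (D * ρ ^ (m+1)) := mul_le_mul_of_nonneg_left h1 hc1
      have e2 : c2 * f (m+1) b2 ≤ c2 * (D * ρ ^ (m+1)) := mul_le_mul_of_nonneg_left h2 hc2
      have e3 : (c1 + c2) * (D * ρ ^ (m+1)) ≤ γ * (D * ρ ^ (m+1)) :=
        mul_le_mul_of_nonneg_right hsum hDr
      have hfb : f m b ≤ γ * (D * ρ ^ (m+1)) := by nlinarith [e1, e2, e3, hle]
      rw [div_le_iff₀ (pow_pos hρ0 m)]
      have : γ * (D * ρ ^ (m+1)) = (γ * ρ) * D * ρ ^ m := by ring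
      linarith [hfb, this.le, this.ge]
  have hDle : D ≤ (γ * ρ) * D := csSup_le hne key
  have hDneg : D ≤ 0 := by
    rcases lt_or_ge 0 D with h | h
    · have h1 : (γ * ρ) * D < 1 * D := mul_lt_mul_of_pos_right hγρ h
      linarith
    · exact h
  intro m b hP
  have h1 : f m b ≤ D * ρ ^ m := hmem m b hP
  have h2 : D * ρ ^ m ≤ 0 := mul_nonpos_of_nonpos_of_nonneg hDneg (pow_nonneg hρ0.le _)
  linarith

/-- The vertical increment `C(m,b) = V★(m+1,b+2) − V★(m+1,b+1)` is
bounded above by the diagonal increment `B(b+1) = V★(b+2,b+2) − V★(b+1,b+1)`. -/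
theorem vertical_increment_bound
    (γ lam0 lam1 lam2 c0 c1 c2 ρ : ℝ)
    (hγ0 : 0 < γ) (hγ1 : γ < 1)
    (hl0 : 0 < lam0) (hl0' : lam0 < 1)
    (hl1 : 0 < lam1) (hl1' : lam1 < 1)
    (hl2 : 0 < lam2) (hl2' : lam2 < 1)
    (hc0 : 0 ≤ c0) (hc1 : 0 ≤ c1) (hc2 : 0 ≤ c2)
    (hord1 : lam2 ≤ lam0) (hord2 : lam0 ≤ lam1)
    (hord3 : c0 ≤ c1) (hord4 : c1 ≤ c2)
    (hρ1 : 1 < ρ) (hρ2 : ρ < 1 / γ)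
    (Vstar : ℕ → ℕ → ℝ)
    (hnorm : ∃ C : ℝ, ∀ m b : ℕ, 1 ≤ b → b ≤ m → |Vstar m b| ≤ C * ρ ^ m)
    (hfix : ∀ m b : ℕ, 1 ≤ b → b ≤ m →
      Vstar m b = Tbell γ lam0 lam1 lam2 c0 c1 c2 Vstar m b) :
    ∀ m b : ℕ, 1 ≤ b → b + 1 ≤ m →
      Vstar (m + 1) (b + 2) - Vstar (m + 1) (b + 1) ≤
        Vstar (b + 2) (b + 2) - Vstar (b + 1) (b + 1) := by
  obtain ⟨C, hC⟩ := hnorm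
  have hγρ : γ * ρ < 1 := by
    have h := (lt_div_iff₀ hγ0).mp hρ2
    nlinarith [h]
  have hρ0 : (0:ℝ) < ρ := by linarith
  have hC0 : 0 ≤ C := by
    have h := hC 1 1 le_rfl le_rfl
    have h0 : (0:ℝ) ≤ |Vstar 1 1| := abs_nonneg _
    nlinarith [h, h0]
  -- uniform bounds on Vstar over states with first index ≤ k
  have hVub : ∀ m b k : ℕ, 1 ≤ b → b ≤ m → m ≤ k → Vstar m b ≤ C * ρ ^ k := by
    intro m b k h1 h2 h3
    have h := (abs_le.mp (hC m b h1 h2)).2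
    have hpow : ρ ^ m ≤ ρ ^ k := pow_le_pow_right₀ hρ1.le h3
    nlinarith [h, mul_le_mul_of_nonneg_left hpow hC0]
  have hVlb : ∀ m b k : ℕ, 1 ≤ b → b ≤ m → m ≤ k → -(C * ρ ^ k) ≤ Vstar m b := by
    intro m b k h1 h2 h3
    have h := (abs_le.mp (hC m b h1 h2)).1
    have hpow : ρ ^ m ≤ ρ ^ k := pow_le_pow_right₀ hρ1.le h3
    nlinarith [h, mul_le_mul_of_nonneg_left hpow hC0]
  set K : ℝ := 4 * C * ρ ^ 2 + 1 with hKdef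
  have hKb : ∀ m : ℕ, 4 * (C * ρ ^ (m + 2)) + 1 ≤ K * ρ ^ m := by
    intro m
    have h1 : (1:ℝ) ≤ ρ ^ m := by
      induction m with
      | zero => norm_num
      | succ n ih => rw [pow_succ]; nlinarith
    have h2 : (ρ:ℝ) ^ (m + 2) = ρ ^ m * ρ ^ 2 := by ring
    rw [h2, hKdef]
    nlinarith [h1, hC0, sq_nonneg ρ, mul_nonneg hC0 (sq_nonneg ρ)]
  -- value is below each action value
  have hVQ0 : ∀ m b : ℕ, 1 ≤ b → b ≤ m → Vstar m b ≤ Q0 γ lam0 c0 Vstar m b := by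
    intro m b h1 h2
    rw [hfix m b h1 h2]
    exact min_le_left _ _
  have hVQ1 : ∀ m b : ℕ, 1 ≤ b → b ≤ m → Vstar m b ≤ Q1 γ lam1 c1 Vstar m b := by
    intro m b h1 h2
    rw [hfix m b h1 h2]
    exact le_trans (min_le_right _ _) (min_le_left _ _)
  have hVQ2 : ∀ m b : ℕ, 1 ≤ b → b ≤ m → Vstar m b ≤ Q2 γ lam2 c2 Vstar m b := by
    intro m b h1 h2
    rw [hfix m b h1 h2]
    exact le_trans (min_le_right _ _) (min_le_right _ _)
  have hcases : ∀ m b : ℕ, 1 ≤ b → b ≤ m →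
      Vstar m b = Q0 γ lam0 c0 Vstar m b ∨ Vstar m b = Q1 γ lam1 c1 Vstar m b ∨
        Vstar m b = Q2 γ lam2 c2 Vstar m b := by
    intro m b h1 h2
    rw [hfix m b h1 h2]
    unfold Tbell
    rcases le_total (Q0 γ lam0 c0 Vstar m b) (min (Q1 γ lam1 c1 Vstar m b) (Q2 γ lam2 c2 Vstar m b)) with h | h
    · left; rw [min_eq_left h]
    · rw [min_eq_right h]
      rcases le_total (Q1 γ lam1 c1 Vstar m b) (Q2 γ lam2 c2 Vstar m b) with h' | h'
      · right; left; rw [min_eq_left h']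
      · right; right; rw [min_eq_right h']
  -- F1 : monotonicity in m
  have F1 : ∀ m b : ℕ, (1 ≤ b ∧ b ≤ m) → Vstar m b - Vstar (m+1) b ≤ 0 := by
    apply contract_aux γ ρ hγ0.le hρ1.le hγρ _ _ K
    · rintro m b ⟨h1, h2⟩
      have e1 := hVub m b (m+2) h1 h2 (by omega)
      have e2 := hVlb (m+1) b (m+2) h1 (by omega) (by omega)
      have e3 := hKb m
      have e4 : 0 ≤ C * ρ ^ (m+2) := by positivity
      linarith
    · rintro m b ⟨h1, h2⟩
      rcases hcases (m+1) b h1 (by omega) with h | h | h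
      · refine ⟨γ * lam0, γ * (1 - lam0), 1, b + 1, by positivity,
          mul_nonneg hγ0.le (by linarith), le_of_eq (by ring), ⟨le_rfl, by omega⟩,
          ⟨by omega, by omega⟩, ?_⟩
        have e1 := hVQ0 m b h1 h2
        simp only [Q0] at h e1
        push_cast at h e1 ⊢
        linarith
      · refine ⟨γ * (1 - lam1), 0, b + 1, b + 1, mul_nonneg hγ0.le (by linarith),
          le_rfl, by nlinarith, ⟨by omega, by omega⟩, ⟨by omega, by omega⟩, ?_⟩
        have e1 := hVQ1 m b h1 h2
        simp only [Q1] at h e1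
        push_cast at h e1 ⊢
        linarith
      · refine ⟨γ * (1 - lam2), 0, b + 1, b + 1, mul_nonneg hγ0.le (by linarith),
          le_rfl, by nlinarith, ⟨by omega, by omega⟩, ⟨by omega, by omega⟩, ?_⟩
        have e1 := hVQ2 m b h1 h2
        simp only [Q2] at h e1
        push_cast at h e1 ⊢
        linarith

  have hmulle : ∀ a x y : ℝ, 0 ≤ a → a ≤ 1 → x ≤ y → 0 ≤ y → a * x ≤ y := by
    intro a x y ha ha1 hxy hy
    calc a * x ≤ a * y := mul_le_mul_of_nonneg_left hxy ha
      _ ≤ 1 * y := mul_le_mul_of_nonneg_right ha1 hy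
      _ = y := one_mul y
  -- F2 : monotonicity of the diagonal
  have F2 : ∀ m b : ℕ, (1 ≤ m ∧ b = 1) → Vstar m m - Vstar (m+1) (m+1) ≤ 0 := by
    apply contract_aux γ ρ hγ0.le hρ1.le hγρ _ _ K
    · rintro m b ⟨h1, -⟩
      have e1 := hVub m m (m+2) h1 le_rfl (by omega)
      have e2 := hVlb (m+1) (m+1) (m+2) (by omega) le_rfl (by omega)
      have e3 := hKb m
      have e4 : 0 ≤ C * ρ ^ (m+2) := by positivity
      linarith
    · rintro m b ⟨h1, -⟩
      rcases hcases (m+1) (m+1) (by omega) le_rfl with h | h | h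
      · have hf1 := F1 (m+1) 1 ⟨le_rfl, by omega⟩
        have t0 : γ * lam0 * (Vstar (m+1) 1 - Vstar (m+1+1) 1) ≤ 0 :=
          mul_nonpos_of_nonneg_of_nonpos (mul_nonneg hγ0.le hl0.le) hf1
        refine ⟨γ * (1 - lam0), 0, 1, 1, mul_nonneg hγ0.le (by linarith), le_rfl,
          by nlinarith, ⟨by omega, rfl⟩, ⟨by omega, rfl⟩, ?_⟩
        have e1 := hVQ0 m m h1 le_rfl
        simp only [Q0] at h e1
        push_cast at h e1 ⊢
        linarith [t0]
      · refine ⟨γ, 0, 1, 1, hγ0.le, le_rfl, by linarith, ⟨by omega, rfl⟩, ⟨by omega, rfl⟩, ?_⟩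
        have e1 := hVQ1 m m h1 le_rfl
        simp only [Q1] at h e1
        push_cast at h e1 ⊢
        linarith
      · have hf1 := F1 (m+1) 1 ⟨le_rfl, by omega⟩
        have t0 : γ * lam2 * (Vstar (m+1) 1 - Vstar (m+1+1) 1) ≤ 0 :=
          mul_nonpos_of_nonneg_of_nonpos (mul_nonneg hγ0.le hl2.le) hf1
        refine ⟨γ * (1 - lam2), 0, 1, 1, mul_nonneg hγ0.le (by linarith), le_rfl,
          by nlinarith, ⟨by omega, rfl⟩, ⟨by omega, rfl⟩, ?_⟩
        have e1 := hVQ2 m m h1 le_rfl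
        simp only [Q2] at h e1
        push_cast at h e1 ⊢
        linarith [t0]
  -- F3 : monotonicity in b
  have F3 : ∀ m b : ℕ, (1 ≤ b ∧ b + 1 ≤ m) → Vstar m b - Vstar m (b+1) ≤ 0 := by
    apply contract_aux γ ρ hγ0.le hρ1.le hγρ _ _ K
    · rintro m b ⟨h1, h2⟩
      have e1 := hVub m b (m+2) h1 (by omega) (by omega)
      have e2 := hVlb m (b+1) (m+2) (by omega) (by omega) (by omega)
      have e3 := hKb m
      have e4 : 0 ≤ C * ρ ^ (m+2) := by positivity
      linarith
    · rintro m b ⟨h1, h2⟩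
      rcases hcases m (b+1) (by omega) h2 with h | h | h
      · refine ⟨γ * (1 - lam0), 0, b+1, b+1, mul_nonneg hγ0.le (by linarith), le_rfl,
          by nlinarith, ⟨by omega, by omega⟩, ⟨by omega, by omega⟩, ?_⟩
        have e1 := hVQ0 m b h1 (by omega)
        simp only [Q0] at h e1
        push_cast at h e1 ⊢
        linarith
      · have hf2 := F2 (b+1) 1 ⟨by omega, rfl⟩
        have t0 : γ * lam1 * (Vstar (b+1) (b+1) - Vstar (b+1+1) (b+1+1)) ≤ 0 :=
          mul_nonpos_of_nonneg_of_nonpos (mul_nonneg hγ0.le hl1.le) hf2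
        refine ⟨γ * (1 - lam1), 0, b+1, b+1, mul_nonneg hγ0.le (by linarith), le_rfl,
          by nlinarith, ⟨by omega, by omega⟩, ⟨by omega, by omega⟩, ?_⟩
        have e1 := hVQ1 m b h1 (by omega)
        simp only [Q1] at h e1
        push_cast at h e1 ⊢
        linarith [t0]
      · have hf1 := F1 (b+1) 1 ⟨le_rfl, by omega⟩
        have t0 : γ * lam2 * (Vstar (b+1) 1 - Vstar (b+1+1) 1) ≤ 0 :=
          mul_nonpos_of_nonneg_of_nonpos (mul_nonneg hγ0.le hl2.le) hf1
        refine ⟨γ * (1 - lam2), 0, b+1, b+1, mul_nonneg hγ0.le (by linarith), le_rfl,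
          by nlinarith, ⟨by omega, by omega⟩, ⟨by omega, by omega⟩, ?_⟩
        have e1 := hVQ2 m b h1 (by omega)
        simp only [Q2] at h e1
        push_cast at h e1 ⊢
        linarith [t0]
  -- chain of F3 : bottom row is below any column entry
  have hchain : ∀ m b : ℕ, 1 ≤ b → b ≤ m → Vstar m 1 ≤ Vstar m b := by
    intro m b
    induction b with
    | zero => intro h1 _; omega
    | succ n ih =>
      intro _ h2
      rcases Nat.eq_zero_or_pos n with rfl | hn
      · exact le_rfl
      · have hle := ih hn (by omega)
        have h3 := F3 m n ⟨hn, by omega⟩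
        linarith
  -- F4 : at diagonal states action 0 is optimal, exact recursion
  have hdiag : ∀ m : ℕ, 1 ≤ m →
      Vstar m m = (m:ℝ) + c0 + γ * (lam0 * Vstar (m+1) 1 + (1 - lam0) * Vstar (m+1) (m+1)) := by
    intro m hm
    have hch : Vstar (m+1) 1 ≤ Vstar (m+1) (m+1) := hchain (m+1) (m+1) (by omega) le_rfl
    have h01 : Q0 γ lam0 c0 Vstar m m ≤ Q1 γ lam1 c1 Vstar m m := by
      simp only [Q0, Q1]
      have t : γ * lam0 * Vstar (m+1) 1 ≤ γ * lam0 * Vstar (m+1) (m+1) :=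
        mul_le_mul_of_nonneg_left hch (mul_nonneg hγ0.le hl0.le)
      linarith [t]
    have h02 : Q0 γ lam0 c0 Vstar m m ≤ Q2 γ lam2 c2 Vstar m m := by
      simp only [Q0, Q2]
      have t : γ * (lam0 - lam2) * (Vstar (m+1) 1 - Vstar (m+1) (m+1)) ≤ 0 :=
        mul_nonpos_of_nonneg_of_nonpos (mul_nonneg hγ0.le (by linarith)) (by linarith)
      nlinarith [t]
    have hfx := hfix m m hm le_rfl
    rw [hfx]
    unfold Tbell
    rw [min_eq_left (le_min h01 h02)]
    rfl
  -- F5 : discounted growth of horizontal increments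
  have F5 : ∀ m j : ℕ, (1 ≤ j ∧ j ≤ m) →
      γ * (Vstar (m+1+1) j - Vstar (m+1) j) - (Vstar (m+1) j - Vstar m j) ≤ 0 := by
    apply contract_aux γ ρ hγ0.le hρ1.le hγρ _ _ K
    · rintro m j ⟨h1, h2⟩
      have e1 := hVub (m+1+1) j (m+2) h1 (by omega) (by omega)
      have e2 := hVlb (m+1) j (m+2) h1 (by omega) (by omega)
      have e3 := hVub m j (m+2) h1 h2 (by omega)
      have e4 := hVlb (m+1) j (m+2) h1 (by omega) (by omega)
      have e5 : γ * (Vstar (m+1+1) j - Vstar (m+1) j) ≤ 2 * (C * ρ ^ (m+2)) := by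
        refine hmulle γ _ _ hγ0.le hγ1.le (by linarith) (by positivity)
      have e6 := hKb m
      have e7 : 0 ≤ C * ρ ^ (m+2) := by positivity
      linarith
    · rintro m j ⟨h1, h2⟩
      rcases hcases (m+1) j h1 (by omega) with h | h | h
      · have e_up := hVQ0 (m+1+1) j h1 (by omega)
        have e_lo := hVQ0 m j h1 h2
        have e_up' : γ * Vstar (m+1+1) j ≤ γ * Q0 γ lam0 c0 Vstar (m+1+1) j :=
          mul_le_mul_of_nonneg_left e_up hγ0.le
        have h' : γ * Vstar (m+1) j = γ * Q0 γ lam0 c0 Vstar (m+1) j := by rw [← h]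
        refine ⟨γ * lam0, γ * (1 - lam0), 1, j+1, mul_nonneg hγ0.le hl0.le,
          mul_nonneg hγ0.le (by linarith), le_of_eq (by ring), ⟨le_rfl, by omega⟩,
          ⟨by omega, by omega⟩, ?_⟩
        simp only [Q0] at h e_up' e_lo h'
        push_cast at h e_up' e_lo h' ⊢
        linarith [h, e_up', e_lo, h', hγ1]
      · have e_up := hVQ1 (m+1+1) j h1 (by omega)
        have e_lo := hVQ1 m j h1 h2
        have e_up' : γ * Vstar (m+1+1) j ≤ γ * Q1 γ lam1 c1 Vstar (m+1+1) j :=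
          mul_le_mul_of_nonneg_left e_up hγ0.le
        have h' : γ * Vstar (m+1) j = γ * Q1 γ lam1 c1 Vstar (m+1) j := by rw [← h]
        refine ⟨0, γ * (1 - lam1), 1, j+1, le_rfl,
          mul_nonneg hγ0.le (by linarith), by nlinarith, ⟨le_rfl, by omega⟩,
          ⟨by omega, by omega⟩, ?_⟩
        simp only [Q1] at h e_up' e_lo h'
        push_cast at h e_up' e_lo h' ⊢
        linarith [h, e_up', e_lo, h', hγ1]
      · have e_up := hVQ2 (m+1+1) j h1 (by omega)
        have e_lo := hVQ2 m j h1 h2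
        have e_up' : γ * Vstar (m+1+1) j ≤ γ * Q2 γ lam2 c2 Vstar (m+1+1) j :=
          mul_le_mul_of_nonneg_left e_up hγ0.le
        have h' : γ * Vstar (m+1) j = γ * Q2 γ lam2 c2 Vstar (m+1) j := by rw [← h]
        refine ⟨0, γ * (1 - lam2), 1, j+1, le_rfl,
          mul_nonneg hγ0.le (by linarith), by nlinarith, ⟨le_rfl, by omega⟩,
          ⟨by omega, by omega⟩, ?_⟩
        simp only [Q2] at h e_up' e_lo h'
        push_cast at h e_up' e_lo h' ⊢
        linarith [h, e_up', e_lo, h', hγ1]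
  -- F6 : the key quantitative bound  γ·λ0·(B(m+1) − A(m)) ≤ 1
  have F6 : ∀ m b : ℕ, (b = 1) →
      γ * lam0 * ((Vstar (m+1+1) (m+1+1) - Vstar (m+1) (m+1)) -
        (Vstar (m+1+1) 1 - Vstar (m+1) 1)) - 1 ≤ 0 := by
    apply contract_aux γ ρ hγ0.le hρ1.le hγρ (fun _ b => b = 1) _ K
    · rintro m b -
      have e1 := hVub (m+1+1) (m+1+1) (m+2) (by omega) le_rfl (by omega)
      have e2 := hVlb (m+1) (m+1) (m+2) (by omega) le_rfl (by omega)
      have e3 := hVub (m+1) 1 (m+2) le_rfl (by omega) (by omega)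
      have e4 := hVlb (m+1+1) 1 (m+2) le_rfl (by omega) (by omega)
      have hgl1 : γ * lam0 ≤ 1 := by nlinarith
      have e5 : γ * lam0 * ((Vstar (m+1+1) (m+1+1) - Vstar (m+1) (m+1)) -
          (Vstar (m+1+1) 1 - Vstar (m+1) 1)) ≤ 4 * (C * ρ ^ (m+2)) := by
        refine hmulle (γ * lam0) _ _ (mul_nonneg hγ0.le hl0.le) hgl1 (by linarith) (by positivity)
      have e6 := hKb m
      linarith
    · rintro m b -
      have eq1 := hdiag (m+1) (by omega)
      have eq2 := hdiag (m+1+1) (by omega)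
      have eq1' : γ * lam0 * Vstar (m+1) (m+1) = γ * lam0 * ((((m:ℝ)+1)) + c0 +
          γ * (lam0 * Vstar (m+1+1) 1 + (1 - lam0) * Vstar (m+1+1) (m+1+1))) := by
        rw [eq1]; push_cast; ring
      have eq2' : γ * lam0 * Vstar (m+1+1) (m+1+1) = γ * lam0 * ((((m:ℝ)+1+1)) + c0 +
          γ * (lam0 * Vstar (m+1+1+1) 1 + (1 - lam0) * Vstar (m+1+1+1) (m+1+1+1))) := by
        rw [eq2]; push_cast; ring
      have h5 := F5 (m+1) 1 ⟨le_rfl, by omega⟩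
      have h5' : γ * lam0 * (γ * (Vstar (m+1+1+1) 1 - Vstar (m+1+1) 1) -
          (Vstar (m+1+1) 1 - Vstar (m+1) 1)) ≤ 0 :=
        mul_nonpos_of_nonneg_of_nonpos (mul_nonneg hγ0.le hl0.le) h5
      refine ⟨γ * (1 - lam0), 0, 1, 1, mul_nonneg hγ0.le (by linarith), le_rfl,
        by nlinarith, rfl, rfl, ?_⟩
      linarith [eq1', eq2', h5', hγ1]
  -- Main family : C(m,b) − B(b+1) ≤ 0
  have F7 : ∀ m b : ℕ, (1 ≤ b ∧ b + 1 ≤ m) →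
      (Vstar (m+1) (b+1+1) - Vstar (m+1) (b+1)) -
        (Vstar (b+1+1) (b+1+1) - Vstar (b+1) (b+1)) ≤ 0 := by
    apply contract_aux γ ρ hγ0.le hρ1.le hγρ _ _ K
    · rintro m b ⟨h1, h2⟩
      have e1 := hVub (m+1) (b+1+1) (m+2) (by omega) (by omega) (by omega)
      have e2 := hVlb (m+1) (b+1) (m+2) (by omega) (by omega) (by omega)
      have e3 := hVlb (b+1+1) (b+1+1) (m+2) (by omega) le_rfl (by omega)
      have e4 := hVub (b+1) (b+1) (m+2) (by omega) le_rfl (by omega)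
      have e6 := hKb m
      have e7 : 0 ≤ C * ρ ^ (m+2) := by positivity
      linarith
    · rintro m b ⟨h1, h2⟩
      have eqd1 := hdiag (b+1) (by omega)
      have eqd2 := hdiag (b+1+1) (by omega)
      rcases hcases (m+1) (b+1) (by omega) (by omega) with h | h | h
      · have e1 := hVQ0 (m+1) (b+1+1) (by omega) (by omega)
        have hf1 := F1 (b+1+1) 1 ⟨le_rfl, by omega⟩
        have t0 : 0 ≤ γ * lam0 * (Vstar (b+1+1+1) 1 - Vstar (b+1+1) 1) :=
          mul_nonneg (mul_nonneg hγ0.le hl0.le) (by linarith)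
        refine ⟨γ * (1 - lam0), 0, b+1, b+1, mul_nonneg hγ0.le (by linarith), le_rfl,
          by nlinarith, ⟨by omega, by omega⟩, ⟨by omega, by omega⟩, ?_⟩
        simp only [Q0] at h e1
        push_cast at h e1 eqd1 eqd2 ⊢
        linarith [t0]
      · have e1 := hVQ1 (m+1) (b+1+1) (by omega) (by omega)
        have h6 := F6 (b+1) 1 rfl
        refine ⟨γ * (1 - lam1), 0, b+1, b+1, mul_nonneg hγ0.le (by linarith), le_rfl,
          by nlinarith, ⟨by omega, by omega⟩, ⟨by omega, by omega⟩, ?_⟩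
        simp only [Q1] at h e1
        push_cast at h e1 eqd1 eqd2 ⊢
        linarith [h6]
      · have e1 := hVQ2 (m+1) (b+1+1) (by omega) (by omega)
        have h6 := F6 (b+1) 1 rfl
        have hs : γ * (lam0 - lam2) * ((Vstar (b+1+1+1) (b+1+1+1) - Vstar (b+1+1) (b+1+1)) -
            (Vstar (b+1+1+1) 1 - Vstar (b+1+1) 1)) ≤ 1 := by
          rcases le_or_gt 0 ((Vstar (b+1+1+1) (b+1+1+1) - Vstar (b+1+1) (b+1+1)) -
              (Vstar (b+1+1+1) 1 - Vstar (b+1+1) 1)) with hX | hX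
          · have hcc : γ * (lam0 - lam2) ≤ γ * lam0 := by nlinarith [mul_nonneg hγ0.le hl2.le]
            have := mul_le_mul_of_nonneg_right hcc hX
            linarith [h6, this]
          · have := mul_nonpos_of_nonneg_of_nonpos
              (mul_nonneg hγ0.le (by linarith : (0:ℝ) ≤ lam0 - lam2)) hX.le
            linarith
        refine ⟨γ * (1 - lam2), 0, b+1, b+1, mul_nonneg hγ0.le (by linarith), le_rfl,
          by nlinarith, ⟨by omega, by omega⟩, ⟨by omega, by omega⟩, ?_⟩
        simp only [Q2] at h e1
        push_cast at h e1 eqd1 eqd2 ⊢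
        linarith [hs]
  intro m b h1 h2
  have h := F7 m b ⟨h1, h2⟩
  have e : b + 1 + 1 = b + 2 := rfl
  rw [e] at h
  linarith
end

section
/- For each fixed b ≥ 1, the action-difference functions are nondecreasing in the first coordinate: for every m ≥ b, Δ01(m+1,b) ≥ Δ01(m,b), Δ02(m+1,b) ≥ Δ02(m,b), and Δ21(m+1,b) ≥ Δ21(m,b). -/
/-- Action-difference function `Δ01 = Q0(V) − Q1(V)`. -/
noncomputable def D01 (γ lam0 lam1 c0 c1 : ℝ) (V : ℕ → ℕ → ℝ) (m b : ℕ) : ℝ :=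
  Q0 γ lam0 c0 V m b - Q1 γ lam1 c1 V m b

/-- Action-difference function `Δ02 = Q0(V) − Q2(V)`. -/
noncomputable def D02 (γ lam0 lam2 c0 c2 : ℝ) (V : ℕ → ℕ → ℝ) (m b : ℕ) : ℝ :=
  Q0 γ lam0 c0 V m b - Q2 γ lam2 c2 V m b

/-- Action-difference function `Δ21 = Q2(V) − Q1(V)`. -/
noncomputable def D21 (γ lam2 lam1 c2 c1 : ℝ) (V : ℕ → ℕ → ℝ) (m b : ℕ) : ℝ :=
  Q2 γ lam2 c2 V m b - Q1 γ lam1 c1 V m b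

private lemma min3_shift {a b c a' b' c' k K : ℝ}
    (h1 : a + k ≤ a' ∧ a' ≤ a + K) (h2 : b + k ≤ b' ∧ b' ≤ b + K)
    (h3 : c + k ≤ c' ∧ c' ≤ c + K) :
    min a (min b c) + k ≤ min a' (min b' c') ∧
    min a' (min b' c') ≤ min a (min b c) + K := by
  constructor
  · calc min a (min b c) + k = min (a+k) (min (b+k) (c+k)) := by
          rw [min_add_add_right, min_add_add_right]
    _ ≤ min a' (min b' c') := min_le_min h1.1 (min_le_min h2.1 h3.1)
  · calc min a' (min b' c') ≤ min (a+K) (min (b+K) (c+K)) :=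
          min_le_min h1.2 (min_le_min h2.2 h3.2)
    _ = min a (min b c) + K := by rw [min_add_add_right, min_add_add_right]

private lemma combo_abs_le {γ l x y P : ℝ} (hγ : 0 ≤ γ) (hl : 0 ≤ l) (hl' : l ≤ 1)
    (hx : |x| ≤ P) (hy : |y| ≤ P) : |γ * (l * x + (1 - l) * y)| ≤ γ * P := by
  have h1l : (0:ℝ) ≤ 1 - l := by linarith
  calc |γ * (l*x + (1-l)*y)| = γ * |l*x + (1-l)*y| := by rw [abs_mul, abs_of_nonneg hγ]
  _ ≤ γ * (|l*x| + |(1-l)*y|) := by gcongr; exact abs_add_le _ _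
  _ = γ * (l*|x| + (1-l)*|y|) := by
      rw [abs_mul, abs_mul, abs_of_nonneg hl, abs_of_nonneg h1l]
  _ ≤ γ * (l*P + (1-l)*P) := by gcongr
  _ = γ * P := by ring

private lemma Tbell_lip (γ lam0 lam1 lam2 c0 c1 c2 ρ K : ℝ)
    (hγ0 : 0 ≤ γ) (hl0 : 0 ≤ lam0) (hl0' : lam0 ≤ 1) (hl1 : 0 ≤ lam1) (hl1' : lam1 ≤ 1)
    (hl2 : 0 ≤ lam2) (hl2' : lam2 ≤ 1) (hρ : 1 ≤ ρ) (hK : 0 ≤ K)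
    (V W : ℕ → ℕ → ℝ)
    (h : ∀ m b : ℕ, 1 ≤ b → b ≤ m → |V m b - W m b| ≤ K * ρ ^ m) :
    ∀ m b : ℕ, 1 ≤ b → b ≤ m →
      |Tbell γ lam0 lam1 lam2 c0 c1 c2 V m b - Tbell γ lam0 lam1 lam2 c0 c1 c2 W m b|
        ≤ γ * (K * ρ ^ (m+1)) := by
  intro m b hb hbm
  have hpow : ∀ j : ℕ, j ≤ m + 1 → K * ρ ^ j ≤ K * ρ ^ (m+1) := by
    intro j hj
    exact mul_le_mul_of_nonneg_left (pow_le_pow_right₀ hρ hj) hK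
  have hx : |V (m+1) 1 - W (m+1) 1| ≤ K * ρ ^ (m+1) := h _ _ le_rfl (by omega)
  have hy : |V (m+1) (b+1) - W (m+1) (b+1)| ≤ K * ρ ^ (m+1) := h _ _ (by omega) (by omega)
  have hz : |V (b+1) (b+1) - W (b+1) (b+1)| ≤ K * ρ ^ (m+1) :=
    le_trans (h _ _ (by omega) le_rfl) (hpow _ (by omega))
  have hw : |V (b+1) 1 - W (b+1) 1| ≤ K * ρ ^ (m+1) :=
    le_trans (h _ _ le_rfl (by omega)) (hpow _ (by omega))
  have e0 : |Q0 γ lam0 c0 V m b - Q0 γ lam0 c0 W m b| ≤ γ * (K * ρ ^ (m+1)) := by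
    have := combo_abs_le hγ0 hl0 hl0' hx hy
    have heq : Q0 γ lam0 c0 V m b - Q0 γ lam0 c0 W m b
        = γ * (lam0 * (V (m+1) 1 - W (m+1) 1) + (1 - lam0) * (V (m+1) (b+1) - W (m+1) (b+1))) := by
      unfold Q0; ring
    rw [heq]; exact this
  have e1 : |Q1 γ lam1 c1 V m b - Q1 γ lam1 c1 W m b| ≤ γ * (K * ρ ^ (m+1)) := by
    have := combo_abs_le hγ0 hl1 hl1' hz hy
    have heq : Q1 γ lam1 c1 V m b - Q1 γ lam1 c1 W m b
        = γ * (lam1 * (V (b+1) (b+1) - W (b+1) (b+1)) + (1 - lam1) * (V (m+1) (b+1) - W (m+1) (b+1))) := by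
      unfold Q1; ring
    rw [heq]; exact this
  have e2 : |Q2 γ lam2 c2 V m b - Q2 γ lam2 c2 W m b| ≤ γ * (K * ρ ^ (m+1)) := by
    have := combo_abs_le hγ0 hl2 hl2' hw hy
    have heq : Q2 γ lam2 c2 V m b - Q2 γ lam2 c2 W m b
        = γ * (lam2 * (V (b+1) 1 - W (b+1) 1) + (1 - lam2) * (V (m+1) (b+1) - W (m+1) (b+1))) := by
      unfold Q2; ring
    rw [heq]; exact this
  rw [abs_le] at e0 e1 e2 ⊢
  have := min3_shift (a := Q0 γ lam0 c0 W m b) (b := Q1 γ lam1 c1 W m b)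
    (c := Q2 γ lam2 c2 W m b) (a' := Q0 γ lam0 c0 V m b) (b' := Q1 γ lam1 c1 V m b)
    (c' := Q2 γ lam2 c2 V m b) (k := -(γ * (K * ρ ^ (m+1)))) (K := γ * (K * ρ ^ (m+1)))
    ⟨by linarith [e0.1, e0.2], by linarith [e0.1, e0.2]⟩
    ⟨by linarith [e1.1, e1.2], by linarith [e1.1, e1.2]⟩
    ⟨by linarith [e2.1, e2.2], by linarith [e2.1, e2.2]⟩
  unfold Tbell
  constructor <;> linarith [this.1, this.2]

private lemma Tbell_step_s11 (γ lam0 lam1 lam2 c0 c1 c2 l M : ℝ)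
    (hγ0 : 0 ≤ γ) (hl0 : 0 ≤ lam0) (hl0' : lam0 ≤ 1) (hl1 : 0 ≤ lam1) (hl1' : lam1 ≤ 1)
    (hl2 : 0 ≤ lam2) (hl2' : lam2 ≤ 1) (hord1 : lam2 ≤ lam0) (hord2 : lam0 ≤ lam1) (hl : 0 ≤ l)
    (W : ℕ → ℕ → ℝ)
    (h : ∀ m b : ℕ, 1 ≤ b → b ≤ m → l ≤ W (m+1) b - W m b ∧ W (m+1) b - W m b ≤ M) :
    ∀ m b : ℕ, 1 ≤ b → b ≤ m →
      1 + γ*(1-lam1)*l ≤ Tbell γ lam0 lam1 lam2 c0 c1 c2 W (m+1) b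
          - Tbell γ lam0 lam1 lam2 c0 c1 c2 W m b ∧
      Tbell γ lam0 lam1 lam2 c0 c1 c2 W (m+1) b
          - Tbell γ lam0 lam1 lam2 c0 c1 c2 W m b ≤ 1 + γ*M := by
  intro m b hb hbm
  have hM0 : 0 ≤ M := by
    have := h 1 1 le_rfl le_rfl; linarith [this.1, this.2]
  obtain ⟨hA1, hA2⟩ := h (m+1) 1 le_rfl (by omega)
  obtain ⟨hB1, hB2⟩ := h (m+1) (b+1) (by omega) (by omega)
  set A := W (m+1+1) 1 - W (m+1) 1 with hA
  set B := W (m+1+1) (b+1) - W (m+1) (b+1) with hB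
  have q0 : Q0 γ lam0 c0 W m b + (1 + γ*(1-lam1)*l) ≤ Q0 γ lam0 c0 W (m+1) b ∧
      Q0 γ lam0 c0 W (m+1) b ≤ Q0 γ lam0 c0 W m b + (1 + γ*M) := by
    have heq : Q0 γ lam0 c0 W (m+1) b - Q0 γ lam0 c0 W m b
        = 1 + γ * (lam0 * A + (1 - lam0) * B) := by
      unfold Q0; push_cast; ring
    constructor <;> linarith [heq, mul_nonneg (mul_nonneg hγ0 hl0) (sub_nonneg.2 hA1),
      mul_nonneg (mul_nonneg hγ0 (by linarith : (0:ℝ) ≤ 1 - lam0)) (sub_nonneg.2 hB1),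
      mul_nonneg (mul_nonneg hγ0 hl1) hl,
      mul_nonneg (mul_nonneg hγ0 hl0) (sub_nonneg.2 hA2),
      mul_nonneg (mul_nonneg hγ0 (by linarith : (0:ℝ) ≤ 1 - lam0)) (sub_nonneg.2 hB2)]
  have q1 : Q1 γ lam1 c1 W m b + (1 + γ*(1-lam1)*l) ≤ Q1 γ lam1 c1 W (m+1) b ∧
      Q1 γ lam1 c1 W (m+1) b ≤ Q1 γ lam1 c1 W m b + (1 + γ*M) := by
    have heq : Q1 γ lam1 c1 W (m+1) b - Q1 γ lam1 c1 W m b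
        = 1 + γ * ((1 - lam1) * B) := by
      unfold Q1; push_cast; ring
    constructor <;> linarith [heq, mul_nonneg (mul_nonneg hγ0 (by linarith : (0:ℝ) ≤ 1 - lam1)) (sub_nonneg.2 hB1),
      mul_nonneg (mul_nonneg hγ0 (by linarith : (0:ℝ) ≤ 1 - lam1)) (sub_nonneg.2 hB2),
      mul_nonneg (mul_nonneg hγ0 hl1) hM0]
  have q2 : Q2 γ lam2 c2 W m b + (1 + γ*(1-lam1)*l) ≤ Q2 γ lam2 c2 W (m+1) b ∧
      Q2 γ lam2 c2 W (m+1) b ≤ Q2 γ lam2 c2 W m b + (1 + γ*M) := by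
    have heq : Q2 γ lam2 c2 W (m+1) b - Q2 γ lam2 c2 W m b
        = 1 + γ * ((1 - lam2) * B) := by
      unfold Q2; push_cast; ring
    constructor <;> linarith [heq, mul_nonneg (mul_nonneg hγ0 (by linarith : (0:ℝ) ≤ 1 - lam2)) (sub_nonneg.2 hB1),
      mul_nonneg (mul_nonneg hγ0 (by linarith : (0:ℝ) ≤ 1 - lam2)) (sub_nonneg.2 hB2),
      mul_nonneg (mul_nonneg hγ0 hl2) hM0,
      mul_nonneg (mul_nonneg hγ0 (by linarith : (0:ℝ) ≤ lam1 - lam2)) (le_trans hl hB1),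
      mul_nonneg (mul_nonneg hγ0 (by linarith : (0:ℝ) ≤ 1 - lam1)) (sub_nonneg.2 hB1)]
  have := min3_shift q0 q1 q2
  unfold Tbell
  constructor <;> linarith [this.1, this.2]

noncomputable def Uiter (γ lam0 lam1 lam2 c0 c1 c2 : ℝ) : ℕ → ℕ → ℕ → ℝ :=
  fun n => (Tbell γ lam0 lam1 lam2 c0 c1 c2)^[n] (fun _ _ => 0)

private lemma Uiter_zero (γ lam0 lam1 lam2 c0 c1 c2 : ℝ) :
    Uiter γ lam0 lam1 lam2 c0 c1 c2 0 = fun _ _ => 0 := rfl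

private lemma Uiter_succ (γ lam0 lam1 lam2 c0 c1 c2 : ℝ) (n : ℕ) :
    Uiter γ lam0 lam1 lam2 c0 c1 c2 (n+1)
      = Tbell γ lam0 lam1 lam2 c0 c1 c2 (Uiter γ lam0 lam1 lam2 c0 c1 c2 n) :=
  Function.iterate_succ_apply' _ _ _

private lemma Vstar_increment_bounds
    (γ lam0 lam1 lam2 c0 c1 c2 ρ : ℝ)
    (hγ0 : 0 < γ) (hγ1 : γ < 1)
    (hl0 : 0 < lam0) (hl0' : lam0 < 1)
    (hl1 : 0 < lam1) (hl1' : lam1 < 1)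
    (hl2 : 0 < lam2) (hl2' : lam2 < 1)
    (hord1 : lam2 ≤ lam0) (hord2 : lam0 ≤ lam1)
    (hρ1 : 1 < ρ) (hρ2 : ρ < 1 / γ)
    (Vstar : ℕ → ℕ → ℝ)
    (hnorm : ∃ C : ℝ, ∀ m b : ℕ, 1 ≤ b → b ≤ m → |Vstar m b| ≤ C * ρ ^ m)
    (hfix : ∀ m b : ℕ, 1 ≤ b → b ≤ m →
      Vstar m b = Tbell γ lam0 lam1 lam2 c0 c1 c2 Vstar m b) :
    ∀ m b : ℕ, 1 ≤ b → b ≤ m →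
      1 / (1 - γ*(1-lam1)) ≤ Vstar (m+1) b - Vstar m b ∧
      Vstar (m+1) b - Vstar m b ≤ 1 / (1-γ) := by
  obtain ⟨C0, hC0⟩ := hnorm
  set C := max C0 0 with hC
  have hCnn : 0 ≤ C := le_max_right _ _
  have hVC : ∀ m b : ℕ, 1 ≤ b → b ≤ m → |Vstar m b| ≤ C * ρ ^ m := by
    intro m b hb hbm
    exact le_trans (hC0 m b hb hbm)
      (mul_le_mul_of_nonneg_right (le_max_left _ _) (by positivity))
  have hγρ : 0 ≤ γ * ρ := by positivity
  have hγρ1 : γ * ρ < 1 := by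
    have := (mul_lt_mul_iff_right₀ hγ0).2 hρ2
    rwa [mul_one_div, div_self (ne_of_gt hγ0)] at this
  set U := Uiter γ lam0 lam1 lam2 c0 c1 c2 with hU
  have hUs : ∀ n x y, U (n+1) x y = Tbell γ lam0 lam1 lam2 c0 c1 c2 (U n) x y := by
    intro n x y; rw [hU, Uiter_succ]
  -- contraction estimate
  have hconv : ∀ n, ∀ m b : ℕ, 1 ≤ b → b ≤ m →
      |U n m b - Vstar m b| ≤ (γ*ρ)^n * C * ρ ^ m := by
    intro n
    induction n with
    | zero =>
      intro m b hb hbm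
      simpa [hU, Uiter_zero] using hVC m b hb hbm
    | succ n ih =>
      intro m b hb hbm
      have hK : (0:ℝ) ≤ (γ*ρ)^n * C := mul_nonneg (pow_nonneg hγρ n) hCnn
      have ih' : ∀ m b : ℕ, 1 ≤ b → b ≤ m →
          |U n m b - Vstar m b| ≤ ((γ*ρ)^n * C) * ρ ^ m := by
        intro m b hb hbm; simpa [mul_assoc] using ih m b hb hbm
      have key := Tbell_lip γ lam0 lam1 lam2 c0 c1 c2 ρ ((γ*ρ)^n * C)
        hγ0.le hl0.le hl0'.le hl1.le hl1'.le hl2.le hl2'.le hρ1.le hK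
        (U n) Vstar ih' m b hb hbm
      rw [← hfix m b hb hbm] at key
      calc |U (n+1) m b - Vstar m b|
          = |Tbell γ lam0 lam1 lam2 c0 c1 c2 (U n) m b - Vstar m b| := by rw [hUs]
        _ ≤ γ * ((γ*ρ)^n * C * ρ ^ (m+1)) := key
        _ = (γ*ρ)^(n+1) * C * ρ ^ m := by ring
  have hq0 : (0:ℝ) ≤ γ*(1-lam1) := mul_nonneg hγ0.le (by linarith)
  have hq1 : γ*(1-lam1) < 1 := by nlinarith
  have h1q : (0:ℝ) < 1 - γ*(1-lam1) := by linarith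
  have h1γ : (0:ℝ) < 1 - γ := by linarith
  -- increment bounds for the iterates
  have hinc : ∀ n, ∀ m b : ℕ, 1 ≤ b → b ≤ m →
      (1 - (γ*(1-lam1))^n)/(1 - γ*(1-lam1)) ≤ U n (m+1) b - U n m b ∧
      U n (m+1) b - U n m b ≤ 1/(1-γ) := by
    intro n
    induction n with
    | zero =>
      intro m b hb hbm
      have : U 0 (m+1) b - U 0 m b = 0 := by simp [hU, Uiter_zero]
      rw [this]
      constructor
      · simp
      · positivity
    | succ n ih =>
      have hln : (0:ℝ) ≤ (1 - (γ*(1-lam1))^n)/(1 - γ*(1-lam1)) :=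
        div_nonneg (by nlinarith [pow_le_one₀ hq0 hq1.le (n := n)]) h1q.le
      have step := Tbell_step_s11 γ lam0 lam1 lam2 c0 c1 c2
        ((1 - (γ*(1-lam1))^n)/(1 - γ*(1-lam1))) (1/(1-γ))
        hγ0.le hl0.le hl0'.le hl1.le hl1'.le hl2.le hl2'.le hord1 hord2 hln
        (U n) ih
      intro m b hb hbm
      obtain ⟨s1, s2⟩ := step m b hb hbm
      have e2 : (1 - (γ*(1-lam1))^(n+1))/(1 - γ*(1-lam1))
          = 1 + γ*(1-lam1)*((1 - (γ*(1-lam1))^n)/(1 - γ*(1-lam1))) := by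
        field_simp
        ring
      have e3 : 1 + γ*(1/(1-γ)) = 1/(1-γ) := by field_simp; ring
      constructor
      · rw [hUs, hUs, e2]; exact s1
      · rw [hUs, hUs]; linarith
  -- pass to the limit
  intro m b hb hbm
  set D := C * (ρ^(m+1) + ρ^m) with hD
  have t1 : Filter.Tendsto (fun n : ℕ => (γ*(1-lam1))^n) Filter.atTop (nhds 0) :=
    tendsto_pow_atTop_nhds_zero_of_lt_one hq0 hq1
  have t2 : Filter.Tendsto (fun n : ℕ => (γ*ρ)^n) Filter.atTop (nhds 0) :=
    tendsto_pow_atTop_nhds_zero_of_lt_one hγρ hγρ1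
  have lim1 : Filter.Tendsto
      (fun n : ℕ => (1 - (γ*(1-lam1))^n)/(1 - γ*(1-lam1)) - (γ*ρ)^n * D)
      Filter.atTop (nhds (1/(1 - γ*(1-lam1)))) := by
    have := ((t1.const_sub 1).div_const (1 - γ*(1-lam1))).sub (t2.mul_const D)
    simpa using this
  have lim2 : Filter.Tendsto
      (fun n : ℕ => 1/(1-γ) + (γ*ρ)^n * D)
      Filter.atTop (nhds (1/(1-γ))) := by
    have := (t2.mul_const D).const_add (1/(1-γ))
    simpa using this
  constructor
  · refine le_of_tendsto' lim1 ?_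
    intro n
    have h1 := hconv n (m+1) b hb (by omega)
    have h2 := hconv n m b hb hbm
    have h3 := (hinc n m b hb hbm).1
    rw [abs_le] at h1 h2
    rw [hD]
    linarith [h1.1, h1.2, h2.1, h2.2, h3]
  · refine ge_of_tendsto' lim2 ?_
    intro n
    have h1 := hconv n (m+1) b hb (by omega)
    have h2 := hconv n m b hb hbm
    have h3 := (hinc n m b hb hbm).2
    rw [abs_le] at h1 h2
    rw [hD]
    linarith [h1.1, h1.2, h2.1, h2.2, h3]

/-- Under Assumption 1, for each fixed `b` the action-difference
functions `Δ01`, `Δ02`, `Δ21` are nondecreasing in the first coordinate. -/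
theorem deltas_nondecreasing_in_m
    (γ lam0 lam1 lam2 c0 c1 c2 ρ : ℝ)
    (hγ0 : 0 < γ) (hγ1 : γ < 1)
    (hl0 : 0 < lam0) (hl0' : lam0 < 1)
    (hl1 : 0 < lam1) (hl1' : lam1 < 1)
    (hl2 : 0 < lam2) (hl2' : lam2 < 1)
    (hc0 : 0 ≤ c0) (hc1 : 0 ≤ c1) (hc2 : 0 ≤ c2)
    (hord1 : lam2 ≤ lam0) (hord2 : lam0 ≤ lam1)
    (hord3 : c0 ≤ c1) (hord4 : c1 ≤ c2)
    (hAss1 : γ ≤ lam2 / (lam0 * lam1 + lam2 * (1 - lam1)))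
    (hρ1 : 1 < ρ) (hρ2 : ρ < 1 / γ)
    (Vstar : ℕ → ℕ → ℝ)
    (hnorm : ∃ C : ℝ, ∀ m b : ℕ, 1 ≤ b → b ≤ m → |Vstar m b| ≤ C * ρ ^ m)
    (hfix : ∀ m b : ℕ, 1 ≤ b → b ≤ m →
      Vstar m b = Tbell γ lam0 lam1 lam2 c0 c1 c2 Vstar m b) :
    ∀ m b : ℕ, 1 ≤ b → b ≤ m →
      D01 γ lam0 lam1 c0 c1 Vstar (m + 1) b ≥ D01 γ lam0 lam1 c0 c1 Vstar m b ∧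
      D02 γ lam0 lam2 c0 c2 Vstar (m + 1) b ≥ D02 γ lam0 lam2 c0 c2 Vstar m b ∧
      D21 γ lam2 lam1 c2 c1 Vstar (m + 1) b ≥ D21 γ lam2 lam1 c2 c1 Vstar m b := by
  have hbounds := Vstar_increment_bounds γ lam0 lam1 lam2 c0 c1 c2 ρ
    hγ0 hγ1 hl0 hl0' hl1 hl1' hl2 hl2' hord1 hord2 hρ1 hρ2 Vstar hnorm hfix
  have h1q : (0:ℝ) < 1 - γ*(1-lam1) := by nlinarith
  have h1γ : (0:ℝ) < 1 - γ := by linarith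
  -- Assumption 1, cleared of the division
  have hDen : (0:ℝ) < lam0 * lam1 + lam2 * (1 - lam1) := by nlinarith
  have hAss : γ * (lam0 * lam1 + lam2 * (1 - lam1)) ≤ lam2 :=
    (le_div_iff₀ hDen).1 hAss1
  -- key inequality : lam0 * L ≥ (lam0 - lam2) * Mc
  have hLMc : (lam0 - lam2) * (1/(1-γ)) ≤ lam0 * (1/(1 - γ*(1-lam1))) := by
    rw [mul_one_div, mul_one_div, div_le_div_iff₀ h1γ h1q]
    nlinarith [hAss]
  intro m b hb hbm
  obtain ⟨hA1, hA2⟩ := hbounds (m+1) 1 le_rfl (by omega)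
  obtain ⟨hB1, hB2⟩ := hbounds (m+1) (b+1) (by omega) (by omega)
  set A := Vstar (m+1+1) 1 - Vstar (m+1) 1 with hA
  set B := Vstar (m+1+1) (b+1) - Vstar (m+1) (b+1) with hB
  have hL0 : (0:ℝ) < 1/(1 - γ*(1-lam1)) := by positivity
  have hA0 : 0 ≤ A := le_trans hL0.le hA1
  have hB0 : 0 ≤ B := le_trans hL0.le hB1
  refine ⟨?_, ?_, ?_⟩
  · have heq : D01 γ lam0 lam1 c0 c1 Vstar (m+1) b - D01 γ lam0 lam1 c0 c1 Vstar m b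
        = γ * (lam0 * A + (lam1 - lam0) * B) := by
      unfold D01 Q0 Q1; push_cast; ring
    have h1' := mul_nonneg hl0.le hA0
    have h2' := mul_nonneg (by linarith : (0:ℝ) ≤ lam1 - lam0) hB0
    have : 0 ≤ γ * (lam0 * A + (lam1 - lam0) * B) := mul_nonneg hγ0.le (by linarith)
    linarith [heq, this]
  · have heq : D02 γ lam0 lam2 c0 c2 Vstar (m+1) b - D02 γ lam0 lam2 c0 c2 Vstar m b
        = γ * (lam0 * A - (lam0 - lam2) * B) := by
      unfold D02 Q0 Q2; push_cast; ring
    have hchain : (lam0 - lam2) * B ≤ lam0 * A := by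
      calc (lam0 - lam2) * B ≤ (lam0 - lam2) * (1/(1-γ)) :=
            mul_le_mul_of_nonneg_left hB2 (by linarith)
      _ ≤ lam0 * (1/(1 - γ*(1-lam1))) := hLMc
      _ ≤ lam0 * A := mul_le_mul_of_nonneg_left hA1 hl0.le
    have : 0 ≤ γ * (lam0 * A - (lam0 - lam2) * B) :=
      mul_nonneg hγ0.le (by linarith)
    linarith [heq, this]
  · have heq : D21 γ lam2 lam1 c2 c1 Vstar (m+1) b - D21 γ lam2 lam1 c2 c1 Vstar m b
        = γ * ((lam1 - lam2) * B) := by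
      unfold D21 Q1 Q2; push_cast; ring
    have : 0 ≤ γ * ((lam1 - lam2) * B) :=
      mul_nonneg hγ0.le (mul_nonneg (by linarith) hB0)
    linarith [heq, this]
end
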